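/- arXiv:1209.3509 — 5 statements merged into one kernel-verified Lean document; each statement's English description precedes it below -/
import Mathlib

section
/- A nonempty partition λ has Frobenius coordinates (a_1,…,a_r | b_1,…,b_r) satisfying a_i = b_i − 1 for all i if and only if the number of rows of λ is one more than the number of columns (i.e., the length of λ equals λ_1 + 1) and the partition obtained by deleting the first row and first column of λ (i.e., (λ_2 − 1, …, λ_{ℓ(λ)} − 1)) again has Frobenius coordinates with a_i = b_i − 1 for all i. -/
/-- A list of natural numbers represents a partition if it is weakly decreasing
and all its parts are positive. -/
def IsPartitionL (l : List ℕ) : Prop := l.Chain' (· ≥ ·) ∧ ∀ x ∈ l, 0 < x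

/-- The `i`-th part (0-indexed), with value `0` beyond the length of the list. -/
def pPart (l : List ℕ) (i : ℕ) : ℕ := l.getD i 0

/-- The `i`-th column length (0-indexed): the `i`-th part of the transposed partition. -/
def pConj (l : List ℕ) (i : ℕ) : ℕ := (l.filter (fun x => decide (i < x))).length

/-- The rank of a partition: the number of boxes on the main diagonal, i.e. the number of
(0-indexed) `i` with `λ_{i+1} > i`. -/
def pRank (l : List ℕ) : ℕ := ((List.range l.length).filter (fun i => decide (i < pPart l i))).length

/-- Delete the first row and the first column of a partition. -/
def pRemoveRC (l : List ℕ) : List ℕ :=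
  ((l.drop 1).map (fun x => x - 1)).filter (fun x => decide (0 < x))

/-- The Frobenius coordinate `a_i = λ_i - i + 1` (for `1 ≤ i ≤ rank`); with our 0-indexed
convention, `pFrobA l i = λ_{i+1} - (i+1) + 1` for `0 ≤ i < rank`. -/
def pFrobA (l : List ℕ) (i : ℕ) : ℤ := (pPart l i : ℤ) - i

/-- The Frobenius coordinate `b_i = λ†_i - i + 1` (for `1 ≤ i ≤ rank`), 0-indexed. -/
def pFrobB (l : List ℕ) (i : ℕ) : ℤ := (pConj l i : ℤ) - i

/-- The transpose (conjugate) of a partition, as a list of its column lengths. -/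
def pConjList (l : List ℕ) : List ℕ := (List.range (pPart l 0)).map (fun i => pConj l i)


/-- `μ` has Frobenius coordinates satisfying `a_i = b_i - 1` for all `i`. -/
def QNegOne (l : List ℕ) : Prop := ∀ i < pRank l, pFrobA l i = pFrobB l i - 1

lemma pPart_anti (l : List ℕ) (hc : l.Chain' (· ≥ ·)) {i j : ℕ} (hij : i ≤ j) :
    pPart l j ≤ pPart l i := by
  rcases lt_or_ge j l.length with hj | hj
  · have hi : i < l.length := lt_of_le_of_lt hij hj
    rw [pPart, pPart, l.getD_eq_getElem 0 hj, l.getD_eq_getElem 0 hi]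
    rcases eq_or_lt_of_le hij with rfl | h
    · exact le_refl _
    · exact (List.pairwise_iff_getElem.mp (List.isChain_iff_pairwise.mp hc)) i j hi hj h
  · rw [pPart, List.getD_eq_default _ _ hj]; exact Nat.zero_le _

lemma pPart_pos_lt_length (l : List ℕ) {i : ℕ} (h : 0 < pPart l i) : i < l.length := by
  by_contra hcon
  rw [pPart, List.getD_eq_default _ _ (le_of_not_gt hcon)] at h
  omega

lemma filter_range_eq (p : ℕ → Bool) (hmono : ∀ i j, i ≤ j → p j = true → p i = true) (n : ℕ) :
    (List.range n).filter p = List.range (((List.range n).filter p).length) := by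
  induction n with
  | zero => simp
  | succ n ih =>
    by_cases hp : p n = true
    · have h1 : (List.range (n+1)).filter p = List.range (n+1) :=
        List.filter_eq_self.mpr (fun x hx =>
          hmono x n (Nat.lt_succ_iff.mp (List.mem_range.mp hx)) hp)
      rw [h1]
      simp
    · rw [List.range_succ, List.filter_append]
      simp only [List.filter_cons, hp, if_neg, List.filter_nil, List.append_nil]
      simpa using ih

lemma lt_pRank_iff (l : List ℕ) (hc : l.Chain' (· ≥ ·)) (i : ℕ) :
    i < pRank l ↔ i < pPart l i := by
  have hmono : ∀ a b, a ≤ b → (decide (b < pPart l b)) = true → (decide (a < pPart l a)) = true := by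
    intro a b hab h
    simp only [decide_eq_true_eq] at *
    exact lt_of_le_of_lt hab (lt_of_lt_of_le h (pPart_anti l hc hab))
  have key := filter_range_eq _ hmono l.length
  unfold pRank
  constructor
  · intro h
    have hm : i ∈ (List.range l.length).filter (fun i => decide (i < pPart l i)) := by
      rw [key]; exact List.mem_range.mpr h
    simpa using (List.mem_filter.mp hm).2
  · intro h
    have hi : i < l.length := pPart_pos_lt_length l (lt_of_le_of_lt (Nat.zero_le i) h)
    have hm : i ∈ (List.range l.length).filter (fun i => decide (i < pPart l i)) :=
      List.mem_filter.mpr ⟨List.mem_range.mpr hi, by simpa using h⟩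
    rw [key] at hm
    exact List.mem_range.mp hm

lemma qnegone_iff (l : List ℕ) (hc : l.Chain' (· ≥ ·)) :
    QNegOne l ↔ ∀ i, i < pPart l i → pConj l i = pPart l i + 1 := by
  unfold QNegOne pFrobA pFrobB
  constructor
  · intro h i hi
    have := h i ((lt_pRank_iff l hc i).mpr hi)
    omega
  · intro h i hi
    have := h i ((lt_pRank_iff l hc i).mp hi)
    omega

lemma filter_pos_getD (s : List ℕ) (hc : s.Chain' (· ≥ ·)) (j : ℕ) :
    (s.filter (fun x => decide (0 < x))).getD j 0 = s.getD j 0 := by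
  induction s generalizing j with
  | nil => simp
  | cons a t ih =>
    have hp := List.isChain_iff_pairwise.mp hc
    rw [List.pairwise_cons] at hp
    by_cases ha : 0 < a
    · rw [List.filter_cons_of_pos (by simpa using ha)]
      cases j with
      | zero => simp
      | succ j =>
        simp only [List.getD_cons_succ]
        exact ih (List.isChain_iff_pairwise.mpr hp.2) j
    · have ha0 : a = 0 := by omega
      have ht0 : ∀ x ∈ t, x = 0 := fun x hx => by have := hp.1 x hx; omega
      rw [List.filter_cons_of_neg (by simpa using ha)]
      have htf : t.filter (fun x => decide (0 < x)) = [] := by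
        rw [List.filter_eq_nil_iff]
        intro x hx
        simp [ht0 x hx]
      rw [htf]
      cases j with
      | zero => simp [ha0]
      | succ j =>
        simp only [List.getD_cons_succ, List.getD_nil]
        rcases lt_or_ge j t.length with hj | hj
        · rw [List.getD_eq_getElem _ _ hj]
          exact (ht0 _ (List.getElem_mem hj)).symm
        · rw [List.getD_eq_default _ _ hj]

lemma chain'_map_sub (l : List ℕ) (hc : l.Chain' (· ≥ ·)) :
    ((l.drop 1).map (fun x => x - 1)).Chain' (· ≥ ·) := by
  show List.IsChain _ _
  rw [List.isChain_map]
  have h1 : (l.drop 1).Chain' (· ≥ ·) := by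
    rw [List.drop_one]; exact hc.tail
  exact h1.imp (fun a b h => by omega)

lemma pPart_removeRC (l : List ℕ) (hc : l.Chain' (· ≥ ·)) (j : ℕ) :
    pPart (pRemoveRC l) j = pPart l (j+1) - 1 := by
  unfold pRemoveRC pPart
  rw [filter_pos_getD _ (chain'_map_sub l hc) j]
  rw [List.getD_eq_getElem?_getD, List.getD_eq_getElem?_getD,
    List.getElem?_map, List.getElem?_drop, Nat.add_comm 1 j]
  cases h : l[j + 1]? with
  | none => simp [h]
  | some x => simp [h]

lemma pConj_removeRC (l : List ℕ) (j : ℕ) :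
    pConj (pRemoveRC l) j = ((l.drop 1).filter (fun x => decide (j+1 < x))).length := by
  unfold pConj pRemoveRC
  rw [List.filter_filter, List.filter_map, List.length_map]
  congr 1
  apply List.filter_congr
  intro x _
  simp only [Function.comp_apply]
  by_cases h : j + 1 < x
  · have h1 : j < x - 1 := by omega
    have h2 : 0 < x - 1 := by omega
    simp [h, h1, h2]
  · have h1 : ¬ j < x - 1 := by omega
    simp [h, h1]

/-- A nonempty partition `λ` has Frobenius coordinates with `a_i = b_i - 1`
for all `i` if and only if the number of rows of `λ` is one more than the number of columns
(`ℓ(λ) = λ₁ + 1`) and the partition obtained by deleting the first row and column of `λ`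
again has Frobenius coordinates with `a_i = b_i - 1` for all `i`. -/
theorem littlewood_Qneg_inductive (l : List ℕ) (hl : IsPartitionL l) (hne : l ≠ []) :
    QNegOne l ↔ (l.length = pPart l 0 + 1 ∧ QNegOne (pRemoveRC l)) := by
  obtain ⟨hc, hpos⟩ := hl
  have hmc : (pRemoveRC l).Chain' (· ≥ ·) :=
    List.isChain_iff_pairwise.mpr
      ((List.isChain_iff_pairwise.mp (chain'_map_sub l hc)).sublist List.filter_sublist)
  have hconj0 : pConj l 0 = l.length := by
    unfold pConj
    rw [List.filter_eq_self.mpr (fun x hx => by simpa using hpos x hx)]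
  have hl0 : 0 < pPart l 0 := by
    obtain ⟨a, t, rfl⟩ := List.exists_cons_of_ne_nil hne
    simpa [pPart] using hpos a (List.mem_cons_self (a := a) (l := t))
  have hsplit : ∀ j, j + 1 < pPart l 0 →
      pConj l (j+1) = ((l.drop 1).filter (fun x => decide (j+1 < x))).length + 1 := by
    intro j hj
    obtain ⟨a, t, rfl⟩ := List.exists_cons_of_ne_nil hne
    simp only [pPart, List.getD_cons_zero] at hj
    simp [pConj, List.filter_cons, hj, Nat.add_comm]
  rw [qnegone_iff l hc, qnegone_iff _ hmc]
  constructor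
  · intro h
    have h0 := h 0 hl0
    rw [hconj0] at h0
    refine ⟨h0, ?_⟩
    intro j hj
    rw [pPart_removeRC l hc] at hj ⊢
    rw [pConj_removeRC]
    have h1 : j + 1 < pPart l (j+1) := by omega
    have h2 := h (j+1) h1
    have h3 : j + 1 < pPart l 0 := lt_of_lt_of_le h1 (pPart_anti l hc (Nat.zero_le _))
    rw [hsplit j h3] at h2
    omega
  · rintro ⟨hlen, h⟩
    intro i hi
    cases i with
    | zero => rw [hconj0, hlen]
    | succ j =>
      have h3 : j + 1 < pPart l 0 := lt_of_lt_of_le hi (pPart_anti l hc (Nat.zero_le _))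
      have hj : j < pPart (pRemoveRC l) j := by rw [pPart_removeRC l hc]; omega
      have h2 := h j hj
      rw [pPart_removeRC l hc, pConj_removeRC] at h2
      rw [hsplit j h3]
      omega
end

section
/- Let π : X' → X be a morphism of proper varieties over C and V a coherent sheaf on X'. Suppose a group G acts compatibly on X', X, π, and V, and suppose that the G-module ⊕_{i,j} H^i(X, R^j π_* V) is semisimple and multiplicity-free. Then the Leray spectral sequence E_2^{i,j} = H^i(X, R^j π_* V) ⇒ H^{i+j}(X', V) degenerates at the second page. -/
open CategoryTheory

/-- An `R`-module is multiplicity-free if any two isomorphic simple submodules coincide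
(each irreducible occurs at most once). -/
def MultiplicityFree (R M : Type*) [Ring R] [AddCommGroup M] [Module R M] : Prop :=
  ∀ S T : Submodule R M, IsSimpleModule R S → IsSimpleModule R T →
    Nonempty (S ≃ₗ[R] T) → S = T

/-- In a semisimple multiplicity-free module, any map between two pieces embedded with
disjoint ranges vanishes. -/
lemma hom_eq_zero_of_multiplicityFree {R M A B : Type*} [Ring R] [AddCommGroup M] [Module R M]
    [AddCommGroup A] [Module R A] [AddCommGroup B] [Module R B]
    [IsSemisimpleModule R M] (hmf : MultiplicityFree R M)
    (i : A →ₗ[R] M) (hi : Function.Injective i)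
    (j : B →ₗ[R] M) (hj : Function.Injective j)
    (hdisj : LinearMap.range i ⊓ LinearMap.range j = ⊥)
    (f : A →ₗ[R] B) : f = 0 := by
  by_contra hf
  have hA : IsSemisimpleModule R A :=
    IsSemisimpleModule.congr (LinearEquiv.ofInjective i hi)
  -- find a simple submodule S of A not contained in ker f
  have hker : LinearMap.ker f ≠ ⊤ := by
    intro h
    apply hf
    ext x
    simpa using LinearMap.mem_ker.mp (h ▸ Submodule.mem_top : x ∈ LinearMap.ker f)
  obtain ⟨S, hSsimple, hSker⟩ :
      ∃ S : Submodule R A, IsSimpleModule R S ∧ ¬ S ≤ LinearMap.ker f := by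
    by_contra h
    push_neg at h
    apply hker
    rw [← top_le_iff, ← IsSemisimpleModule.sSup_simples_eq_top R A]
    exact sSup_le fun m hm => h m hm
  -- f is injective on S
  have hSinj : ∀ x : A, x ∈ S → f x = 0 → x = 0 := by
    intro x hx hfx
    have hbot : S ⊓ LinearMap.ker f = ⊥ := by
      rcases (isSimpleModule_iff_isAtom.mp hSsimple).le_iff.mp (inf_le_left :
          S ⊓ LinearMap.ker f ≤ S) with h | h
      · exact h
      · exact absurd (h ▸ inf_le_right) hSker
    have : x ∈ S ⊓ LinearMap.ker f := ⟨hx, LinearMap.mem_ker.mpr hfx⟩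
    simpa [hbot] using this
  -- the two images of S inside M
  set iS : S →ₗ[R] M := i.comp S.subtype with hiS
  set gS : S →ₗ[R] M := (j.comp f).comp S.subtype with hgS
  have hiSinj : Function.Injective iS := hi.comp (Subtype.val_injective)
  have hgSinj : Function.Injective gS := by
    intro x y hxy
    have : j (f ((x : A))) = j (f ((y : A))) := hxy
    have hfxy : f ((x : A) - (y : A)) = 0 := by
      rw [map_sub, sub_eq_zero]; exact hj this
    have := hSinj ((x : A) - (y : A)) (S.sub_mem x.2 y.2) hfxy
    exact Subtype.ext (sub_eq_zero.mp this)
  set S1 : Submodule R M := LinearMap.range iS with hS1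
  set S2 : Submodule R M := LinearMap.range gS with hS2
  have e1 : S ≃ₗ[R] S1 := LinearEquiv.ofInjective iS hiSinj
  have e2 : S ≃ₗ[R] S2 := LinearEquiv.ofInjective gS hgSinj
  have hS1simple : IsSimpleModule R S1 := IsSimpleModule.congr e1.symm
  have hS2simple : IsSimpleModule R S2 := IsSimpleModule.congr e2.symm
  have heq : S1 = S2 := hmf S1 S2 hS1simple hS2simple ⟨e1.symm.trans e2⟩
  -- derive contradiction: pick x ∈ S with f x ≠ 0
  obtain ⟨x, hxS, hxker⟩ := SetLike.not_le_iff_exists.mp hSker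
  have h1 : i x ∈ S1 := ⟨⟨x, hxS⟩, rfl⟩
  have h2 : i x ∈ LinearMap.range j := by
    have := heq ▸ h1
    obtain ⟨y, hy⟩ := this
    exact ⟨f (y : A), hy⟩
  have : i x ∈ LinearMap.range i ⊓ LinearMap.range j := ⟨⟨x, rfl⟩, h2⟩
  rw [hdisj] at this
  have hx0 : i x = 0 := this
  have : x = 0 := hi (by simpa using hx0)
  exact hxker (by simp [LinearMap.mem_ker, this])

/-- Maps between distinct components of a semisimple multiplicity-free direct sum vanish. -/
lemma directSum_hom_eq_zero {R : Type*} [Ring R] {ι : Type*} [DecidableEq ι]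
    (M : ι → Type*) [∀ i, AddCommGroup (M i)] [∀ i, Module R (M i)]
    [IsSemisimpleModule R (DirectSum ι M)] (hmf : MultiplicityFree R (DirectSum ι M))
    {p q : ι} (hpq : p ≠ q) (f : M p →ₗ[R] M q) : f = 0 := by
  have hlof : ∀ k : ι, Function.Injective (DirectSum.lof R ι M k) := by
    intro k a b h
    have := congrArg (DirectSum.component R ι M k) h
    simpa [DirectSum.component.lof_self] using this
  refine hom_eq_zero_of_multiplicityFree hmf (DirectSum.lof R ι M p) (hlof p)
    (DirectSum.lof R ι M q) (hlof q) ?_ f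
  rw [eq_bot_iff]
  rintro x ⟨⟨a, ha⟩, ⟨b, hb⟩⟩
  have hb0 : b = 0 := by
    have := congrArg (DirectSum.component R ι M q) hb
    rw [DirectSum.component.lof_self] at this
    rw [this, ← ha]
    rw [DirectSum.component.of]
    exact dif_neg hpq
  simp [← hb, hb0]

/-- degeneration criterion for the Leray spectral sequence of a
`G`-equivariant morphism `π : X' → X` of proper varieties and a `G`-equivariant coherent
sheaf `V` on `X'`.  The spectral sequence is presented abstractly through its pages:
`E r p` (for `r : ℕ`) is the `(r+2)`-page in bidegree `p : ℤ × ℤ`, a `G`-representation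
(a module over the group algebra `ℂ[G]`, with morphisms of representations given by
`ℂ[G]`-linear maps, the differentials of the Leray spectral sequence being
`G`-equivariant); `d r (i, j) : E r (i, j) ⟶ E r (i + (r+2), j - (r+2) + 1)` are its
differentials, with `d ∘ d = 0`, and each page `E (r+1)` is the homology of `(E r, d r)`.
If the `G`-module `⊕_{i,j} E₂^{i,j} = ⊕_{i,j} H^i(X, R^j π_* V)` is semisimple and
multiplicity-free, then the spectral sequence degenerates at the second page:
all differentials `d r` (`r ≥ 2`) vanish. -/
theorem leray_degenerates_of_multiplicity_free (G : Type) [Group G]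
    (E : ℕ → ℤ × ℤ → ModuleCat (MonoidAlgebra ℂ G))
    (d : ∀ r : ℕ, ∀ p : ℤ × ℤ,
      E r p ⟶ E r (p.1 + ((r : ℤ) + 2), p.2 - ((r : ℤ) + 2) + 1))
    (hdd : ∀ r : ℕ, ∀ p : ℤ × ℤ,
      d r p ≫ d r (p.1 + ((r : ℤ) + 2), p.2 - ((r : ℤ) + 2) + 1) = 0)
    (hnext : ∀ r : ℕ, ∀ p : ℤ × ℤ,
      Nonempty (E (r + 1) (p.1 + ((r : ℤ) + 2), p.2 - ((r : ℤ) + 2) + 1) ≅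
        (ShortComplex.mk (d r p) (d r (p.1 + ((r : ℤ) + 2), p.2 - ((r : ℤ) + 2) + 1))
          (hdd r p)).homology))
    (hss : IsSemisimpleModule (MonoidAlgebra ℂ G) (DirectSum (ℤ × ℤ) (fun p => E 0 p)))
    (hmf : MultiplicityFree (MonoidAlgebra ℂ G) (DirectSum (ℤ × ℤ) (fun p => E 0 p))) :
    ∀ r p, d r p = 0 := by
  have key : ∀ p q : ℤ × ℤ, p ≠ q → ∀ f : E 0 p ⟶ E 0 q, f = 0 := by
    intro p q hpq f
    exact ModuleCat.hom_ext ((directSum_hom_eq_zero (fun p => E 0 p) hmf hpq f.hom).trans rfl)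
  have step : ∀ r : ℕ, (∀ p, Nonempty (E r p ≅ E 0 p)) → ∀ p, d r p = 0 := by
    intro r hiso p
    obtain ⟨α⟩ := hiso p
    obtain ⟨β⟩ := hiso (p.1 + ((r : ℤ) + 2), p.2 - ((r : ℤ) + 2) + 1)
    have hne : p ≠ (p.1 + ((r : ℤ) + 2), p.2 - ((r : ℤ) + 2) + 1) := by
      intro h
      have := congrArg Prod.fst h
      simp only [Prod.fst] at this
      omega
    have h0 : α.inv ≫ d r p ≫ β.hom = 0 := key _ _ hne _
    calc d r p = α.hom ≫ (α.inv ≫ d r p ≫ β.hom) ≫ β.inv := by simp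
    _ = 0 := by rw [h0]; simp
  have pages : ∀ r, ∀ p, Nonempty (E r p ≅ E 0 p) := by
    intro r
    induction r with
    | zero => exact fun p => ⟨Iso.refl _⟩
    | succ r ih =>
      have hd := step r ih
      intro q
      set p : ℤ × ℤ := (q.1 - ((r : ℤ) + 2), q.2 + ((r : ℤ) + 2) - 1) with hp
      have hq : (p.1 + ((r : ℤ) + 2), p.2 - ((r : ℤ) + 2) + 1) = q := by
        simp only [hp]
        ext <;> dsimp <;> ring
      have main : Nonempty (E (r + 1) (p.1 + ((r : ℤ) + 2), p.2 - ((r : ℤ) + 2) + 1) ≅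
          E 0 (p.1 + ((r : ℤ) + 2), p.2 - ((r : ℤ) + 2) + 1)) := by
        obtain ⟨γ⟩ := hnext r p
        obtain ⟨δ⟩ := ih (p.1 + ((r : ℤ) + 2), p.2 - ((r : ℤ) + 2) + 1)
        exact ⟨γ ≪≫ (ShortComplex.LeftHomologyData.ofZeros _ (hd p) (hd _)).homologyIso ≪≫ δ⟩
      exact hq ▸ main
  intro r p
  exact step r (pages r) p
end

section
/- Let W be the Coxeter group of type BC_∞ acting on the set U of eventually-zero integer sequences, generated by s_0 (negating the first entry) and the adjacent transpositions s_i (i ≥ 1), and let the dot action be w • λ = w(λ + ρ) − ρ with ρ = (−(n+1), −(n+2), …). Then for every partition λ (as an element of U, via its transpose λ†), exactly one of the following holds: (i) there is a unique w ∈ W such that w • λ† is the transpose of a partition with at most n parts, or (ii) there is a non-identity element w ∈ W with w • λ† = λ†. -/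
/-- The generator `s₀` of the type `BC_∞` Weyl group: the automorphism of the set of integer
sequences negating the first entry. -/
def bcS0 : Equiv.Perm (ℕ → ℤ) :=
  Function.Involutive.toPerm (fun f => Function.update f 0 (-(f 0))) (by
    intro f
    funext x
    by_cases hx : x = 0 <;> simp [hx])

/-- The generator `sᵢ` (`i ≥ 1`): the automorphism swapping the entries in (0-indexed)
positions `i` and `i+1`; `bcSwap i` is `s_{i+1}` in the 1-indexed convention. -/
def bcSwap (i : ℕ) : Equiv.Perm (ℕ → ℤ) :=
  (Equiv.swap i (i + 1)).arrowCongr (Equiv.refl ℤ)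

/-- The Coxeter group `W` of type `BC_∞`: the group of automorphisms of the set of integer
sequences generated by `s₀` and the adjacent transpositions `sᵢ`, `i ≥ 1`. -/
def bcW : Subgroup (Equiv.Perm (ℕ → ℤ)) :=
  Subgroup.closure ({bcS0} ∪ Set.range bcSwap)

/-- `ρ = (-(n+1), -(n+2), …)`. -/
def bcRho (n : ℕ) (k : ℕ) : ℤ := -((n : ℤ) + 1 + k)

/-- The dot action `w • λ = w(λ + ρ) - ρ` of `W` on integer sequences. -/
def bcDot (n : ℕ) (w : Equiv.Perm (ℕ → ℤ)) (f : ℕ → ℤ) : ℕ → ℤ :=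
  fun k => w (fun j => f j + bcRho n j) k - bcRho n k

/-- The sequence `λ†` of column lengths of a partition `λ`. -/
def pConjSeq (l : List ℕ) : ℕ → ℤ := fun i => (pConj l i : ℤ)

/-- `g` is the transpose of a partition with at most `n` parts: `g` is weakly decreasing,
takes values in `[0, n]`, and is eventually zero. -/
def IsAdmissibleConj (n : ℕ) (g : ℕ → ℤ) : Prop :=
  (∀ i, 0 ≤ g i) ∧ (∀ i, g (i + 1) ≤ g i) ∧ (∀ i, g i ≤ n) ∧ ∃ N, ∀ k ≥ N, g k = 0

def IsSigned (w : Equiv.Perm (ℕ → ℤ)) : Prop :=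
  ∃ σ : Equiv.Perm ℕ, ∃ ε : ℕ → ℤˣ, ∀ f k, w f k = (ε k : ℤ) * f (σ k)

def signedSub : Subgroup (Equiv.Perm (ℕ → ℤ)) where
  carrier := {w | IsSigned w}
  one_mem' := ⟨1, fun _ => 1, by intro f k; simp⟩
  mul_mem' := by
    rintro a b ⟨σ, ε, ha⟩ ⟨σ', ε', hb⟩
    refine ⟨σ.trans σ', fun k => ε k * ε' (σ k), ?_⟩
    intro f k
    have : (a * b) f k = a (b f) k := rfl
    rw [this, ha, hb]
    simp [Equiv.trans_apply]
    ring
  inv_mem' := by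
    rintro a ⟨σ, ε, ha⟩
    refine ⟨σ.symm, fun k => (ε (σ.symm k))⁻¹, ?_⟩
    intro f k
    have h : a⁻¹ f = a.symm f := rfl
    rw [h]
    have key : a (fun j => ((ε (σ.symm j))⁻¹ : ℤˣ) * f (σ.symm j)) = f := by
      funext m
      rw [ha]
      simp [← mul_assoc, ← Units.val_mul]
    rw [(Equiv.symm_apply_eq a).2 key.symm]

theorem bcW_isSigned {w : Equiv.Perm (ℕ → ℤ)} (hw : w ∈ bcW) : IsSigned w := by
  have : bcW ≤ signedSub := by
    rw [bcW, Subgroup.closure_le]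
    rintro x (rfl | ⟨i, rfl⟩)
    · exact ⟨1, fun k => if k = 0 then -1 else 1, by
        intro f k
        by_cases hk : k = 0 <;> simp [bcS0, Function.Involutive.toPerm, hk, Function.update]⟩
    · exact ⟨Equiv.swap i (i+1), fun _ => 1, by
        intro f k
        simp [bcSwap, Equiv.arrowCongr]⟩
  exact this hw

/-- Sign flip at position `i`. -/
def flipAt (i : ℕ) : Equiv.Perm (ℕ → ℤ) :=
  Function.Involutive.toPerm (fun f => Function.update f i (-(f i))) (by
    intro f
    funext x
    by_cases hx : x = i <;> simp [hx])

lemma flipAt_apply (i : ℕ) (f : ℕ → ℤ) (k : ℕ) :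
    flipAt i f k = if k = i then -(f i) else f k := by
  by_cases hk : k = i <;> simp [flipAt, Function.Involutive.toPerm, hk, Function.update]

lemma bcSwap_apply (i : ℕ) (f : ℕ → ℤ) (k : ℕ) :
    bcSwap i f k = f (Equiv.swap i (i+1) k) := by
  simp [bcSwap, Equiv.arrowCongr]

lemma bcSwap_mem (i : ℕ) : bcSwap i ∈ bcW :=
  Subgroup.subset_closure (Or.inr ⟨i, rfl⟩)

lemma flipAt_mem (i : ℕ) : flipAt i ∈ bcW := by
  induction i with
  | zero =>
    have : flipAt 0 = bcS0 := by
      apply Equiv.ext; intro f; rfl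
    rw [this]; exact Subgroup.subset_closure (Or.inl rfl)
  | succ i ih =>
    have key : flipAt (i+1) = bcSwap i * flipAt i * bcSwap i := by
      apply Equiv.ext; intro f
      funext k
      have h1 : (bcSwap i * flipAt i * bcSwap i) f k = bcSwap i (flipAt i (bcSwap i f)) k := rfl
      rw [h1]
      simp only [bcSwap_apply, flipAt_apply, Equiv.swap_apply_def]
      split_ifs <;> first | rfl | omega | (congr 1 <;> omega)
    rw [key]
    exact mul_mem (mul_mem (bcSwap_mem i) ih) (bcSwap_mem i)

/-- the permutation of sequences induced by a permutation of indices -/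
def mkPerm (σ : Equiv.Perm ℕ) : Equiv.Perm (ℕ → ℤ) := σ.arrowCongr (Equiv.refl ℤ)

lemma mkPerm_apply (σ : Equiv.Perm ℕ) (f : ℕ → ℤ) (k : ℕ) :
    mkPerm σ f k = f (σ.symm k) := by
  simp [mkPerm, Equiv.arrowCongr]

lemma mkPerm_swap_mem (i j : ℕ) (hij : i < j) : mkPerm (Equiv.swap i j) ∈ bcW := by
  induction j with
  | zero => omega
  | succ j ih =>
    rcases Nat.eq_or_lt_of_le (Nat.lt_succ_iff.mp hij) with h | h
    · subst h
      have : mkPerm (Equiv.swap i (i+1)) = bcSwap i := by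
        apply Equiv.ext; intro f; funext k
        rw [mkPerm_apply, bcSwap_apply, Equiv.symm_swap]
      rw [this]; exact bcSwap_mem i
    · have key : mkPerm (Equiv.swap i (j+1)) = bcSwap j * mkPerm (Equiv.swap i j) * bcSwap j := by
        apply Equiv.ext; intro f; funext k
        have h1 : (bcSwap j * mkPerm (Equiv.swap i j) * bcSwap j) f k
            = bcSwap j (mkPerm (Equiv.swap i j) (bcSwap j f)) k := rfl
        rw [h1]
        simp only [bcSwap_apply, mkPerm_apply, Equiv.symm_swap, Equiv.swap_apply_def]
        split_ifs <;> first | rfl | omega | (congr 1 <;> omega)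
      rw [key]
      exact mul_mem (mul_mem (bcSwap_mem j) (ih h)) (bcSwap_mem j)

lemma bcDot_mul (n : ℕ) (w w' : Equiv.Perm (ℕ → ℤ)) (f : ℕ → ℤ) :
    bcDot n (w * w') f = bcDot n w (bcDot n w' f) := by
  funext k
  simp only [bcDot]
  have harg : (fun j => w' (fun j' => f j' + bcRho n j') j - bcRho n j + bcRho n j)
      = w' (fun j' => f j' + bcRho n j') := by funext j; ring
  rw [harg]
  rfl

lemma strictMono_range_eq {f g : ℕ → ℤ} (hf : StrictMono f) (hg : StrictMono g)
    (h : Set.range f = Set.range g) : f = g := by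
  funext k
  induction k using Nat.strong_induction_on with
  | _ k ih =>
    obtain ⟨m, hm⟩ : f k ∈ Set.range g := h ▸ Set.mem_range_self k
    obtain ⟨m', hm'⟩ : g k ∈ Set.range f := h.symm ▸ Set.mem_range_self k
    have h1 : k ≤ m := by
      by_contra hlt
      push_neg at hlt
      have h2 := ih m hlt
      have : m = k := hf.injective (h2.trans hm)
      omega
    have h2 : k ≤ m' := by
      by_contra hlt
      push_neg at hlt
      have h2 := ih m' hlt
      have : m' = k := hg.injective (h2.symm.trans hm')
      omega
    have h3 : g k ≤ g m := hg.monotone h1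
    have h4 : f k ≤ f m' := hf.monotone h2
    omega

lemma zero_fixer {f : ℕ → ℤ} {i : ℕ} (hz : f i = 0) :
    ∃ w ∈ bcW, w ≠ 1 ∧ w f = f := by
  refine ⟨flipAt i, flipAt_mem i, ?_, ?_⟩
  · intro h
    have h2 : flipAt i (fun _ => (1:ℤ)) i = (fun _ => (1:ℤ)) i := by rw [h]; rfl
    rw [flipAt_apply] at h2
    simp at h2
  · funext k
    rw [flipAt_apply]
    split_ifs with hk
    · rw [hk, hz]; ring
    · rfl

lemma pair_fixer {f : ℕ → ℤ} {i j : ℕ} (hij : i < j) (hz : f i ≠ 0) (hsum : f i = - f j) :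
    ∃ w ∈ bcW, w ≠ 1 ∧ w f = f := by
  refine ⟨flipAt i * flipAt j * mkPerm (Equiv.swap i j),
    mul_mem (mul_mem (flipAt_mem i) (flipAt_mem j)) (mkPerm_swap_mem i j hij), ?_, ?_⟩
  · intro h
    set f0 : ℕ → ℤ := fun k => if k = j then 1 else 0 with hf0
    have h2 : flipAt i (flipAt j (mkPerm (Equiv.swap i j) f0)) i = f0 i := by
      have : (flipAt i * flipAt j * mkPerm (Equiv.swap i j)) f0 = f0 := by rw [h]; rfl
      exact congrFun this i ▸ rfl
    simp only [flipAt_apply, mkPerm_apply, Equiv.symm_swap, if_pos rfl,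
      if_neg hij.ne, Equiv.swap_apply_left] at h2
    simp [hf0, hij.ne] at h2
  · funext k
    have hcomp : (flipAt i * flipAt j * mkPerm (Equiv.swap i j)) f k
        = flipAt i (flipAt j (mkPerm (Equiv.swap i j) f)) k := rfl
    rw [hcomp]
    simp only [flipAt_apply, mkPerm_apply, Equiv.symm_swap, if_neg hij.ne]
    rcases eq_or_ne k i with rfl | hki
    · rw [if_pos rfl, Equiv.swap_apply_left]
      omega
    · rw [if_neg hki]
      rcases eq_or_ne k j with rfl | hkj
      · rw [if_pos rfl, Equiv.swap_apply_right]
        omega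
      · rw [if_neg hkj, Equiv.swap_apply_of_ne_of_ne hki hkj]

lemma pPart_max {l : List ℕ} (hl : l.Chain' (· ≥ ·)) : ∀ x ∈ l, x ≤ pPart l 0 := by
  cases l with
  | nil => simp
  | cons a t =>
    intro x hx
    replace hl := List.isChain_iff_pairwise.mp hl
    rcases List.mem_cons.mp hx with rfl | hx
    · simp [pPart]
    · have := (List.pairwise_cons.mp hl).1 x hx
      simpa [pPart] using this

lemma pConj_zero_of_ge {l : List ℕ} (hl : l.Chain' (· ≥ ·)) {k : ℕ} (hk : pPart l 0 ≤ k) :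
    pConj l k = 0 := by
  rw [pConj, List.length_eq_zero_iff, List.filter_eq_nil_iff]
  intro a ha
  have := pPart_max hl a ha
  simp
  omega

lemma pConj_succ_le (l : List ℕ) (i : ℕ) : pConj l (i+1) ≤ pConj l i := by
  apply List.Sublist.length_le
  apply List.monotone_filter_right
  intro a ha
  simp at ha ⊢
  omega

lemma pConj_le_length (l : List ℕ) (i : ℕ) : pConj l i ≤ l.length :=
  List.length_filter_le _ _

def invSet (f : ℕ → ℤ) (N : ℕ) : Finset (ℕ × ℕ) :=
  (Finset.range N ×ˢ Finset.range N).filter (fun p => p.1 < p.2 ∧ |f p.2| < |f p.1|)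

def posSet (f : ℕ → ℤ) (N : ℕ) : Finset ℕ := (Finset.range N).filter (fun i => 0 < f i)

lemma mem_invSet {f : ℕ → ℤ} {N : ℕ} {p : ℕ × ℕ} :
    p ∈ invSet f N ↔ p.1 < N ∧ p.2 < N ∧ p.1 < p.2 ∧ |f p.2| < |f p.1| := by
  simp [invSet, Finset.mem_filter, Finset.mem_product, and_assoc]

lemma mem_posSet {f : ℕ → ℤ} {N i : ℕ} : i ∈ posSet f N ↔ i < N ∧ 0 < f i := by
  simp [posSet]

lemma abs_bcRho (n k : ℕ) : |bcRho n k| = (n:ℤ)+1+k := by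
  have h : (0:ℤ) ≤ (n:ℤ)+1+k := by positivity
  rw [bcRho, abs_neg, abs_of_nonneg h]

lemma sorted_of_empty {n N : ℕ} {f : ℕ → ℤ}
    (htail : ∀ k, N ≤ k → f k = bcRho n k)
    (hbound : ∀ i, i < N → |f i| < (n:ℤ)+1+N)
    (hdist : ∀ i j, |f i| = |f j| → i = j)
    (hnz : ∀ i, f i ≠ 0)
    (hpos : posSet f N = ∅) (hinv : invSet f N = ∅) :
    (∀ k, f (k+1) < f k) ∧ (∀ k, f k < 0) ∧ (∀ k, N ≤ k → f k = bcRho n k) := by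
  have hneg : ∀ k, f k < 0 := by
    intro k
    rcases le_or_gt N k with hk | hk
    · rw [htail k hk, bcRho]; omega
    · have hmem : k ∉ posSet f N := by rw [hpos]; exact Finset.notMem_empty k
      rw [mem_posSet] at hmem
      have := hnz k
      omega
  have habs : ∀ k, |f k| < |f (k+1)| := by
    intro k
    rcases le_or_gt N k with hk | hk
    · rw [htail k hk, htail (k+1) (by omega), abs_bcRho, abs_bcRho]
      push_cast; omega
    · rcases le_or_gt N (k+1) with hk1 | hk1
      · have h1 := hbound k hk
        have h2 : |f (k+1)| = (n:ℤ)+1+(k+1) := by rw [htail (k+1) hk1, abs_bcRho]; push_cast; ring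
        have h3 : (N:ℤ) ≤ (k:ℤ)+1 := by exact_mod_cast hk1
        rw [h2]; push_cast at *; omega
      · have hmem : (k, k+1) ∉ invSet f N := by rw [hinv]; exact Finset.notMem_empty _
        rw [mem_invSet] at hmem
        simp only [not_and] at hmem
        have h4 : ¬ |f (k+1)| < |f k| := fun hcon => hmem hk hk1 (by omega) hcon
        have hne : |f k| ≠ |f (k+1)| := fun h => by have := hdist _ _ h; omega
        omega
  refine ⟨?_, hneg, htail⟩
  intro k
  have h1 := habs k
  have h2 := hneg k
  have h3 := hneg (k+1)
  rw [abs_of_neg h2, abs_of_neg h3] at h1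
  omega

lemma sort_exists (n N : ℕ) : ∀ m : ℕ, ∀ f : ℕ → ℤ,
    (∀ k, N ≤ k → f k = bcRho n k) →
    (∀ i, i < N → |f i| < (n:ℤ)+1+N) →
    (∀ i j, |f i| = |f j| → i = j) →
    (∀ i, f i ≠ 0) →
    (invSet f N).card + (posSet f N).card ≤ m →
    ∃ w ∈ bcW, (∀ k, w f (k+1) < w f k) ∧ (∀ k, w f k < 0) ∧
      (∀ k, N ≤ k → w f k = bcRho n k) := by
  intro m
  induction m with
  | zero =>
    intro f htail hbound hdist hnz hcard
    have h1 : invSet f N = ∅ := Finset.card_eq_zero.mp (by omega)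
    have h2 : posSet f N = ∅ := Finset.card_eq_zero.mp (by omega)
    obtain ⟨ha, hb, hc⟩ := sorted_of_empty htail hbound hdist hnz h2 h1
    exact ⟨1, one_mem _, by simpa using ha, by simpa using hb, by simpa using hc⟩
  | succ m ih =>
    intro f htail hbound hdist hnz hcard
    by_cases hpos : ∃ i, 0 < f i
    · -- flip a positive entry
      obtain ⟨i, hi⟩ := hpos
      have hiN : i < N := by
        by_contra hge
        push_neg at hge
        rw [htail i hge, bcRho] at hi
        omega
      set f' := flipAt i f with hf'
      have happ : ∀ k, f' k = if k = i then -(f i) else f k := fun k => flipAt_apply i f k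
      have habs' : ∀ k, |f' k| = |f k| := by
        intro k; rw [happ]
        split_ifs with h
        · rw [h, abs_neg]
        · rfl
      have htail' : ∀ k, N ≤ k → f' k = bcRho n k := by
        intro k hk; rw [happ, if_neg (by omega)]; exact htail k hk
      have hbound' : ∀ a, a < N → |f' a| < (n:ℤ)+1+N := fun a h => habs' a ▸ hbound a h
      have hdist' : ∀ a b, |f' a| = |f' b| → a = b := by
        intro a b h; apply hdist; rwa [habs', habs'] at h
      have hnz' : ∀ a, f' a ≠ 0 := by
        intro a; rw [happ]
        split_ifs with h
        · exact neg_ne_zero.mpr (hnz i)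
        · exact hnz a
      have hinv' : invSet f' N = invSet f N := by
        apply Finset.filter_congr
        intro p _
        simp [habs']
      have hposS : posSet f' N = (posSet f N).erase i := by
        ext a
        rw [mem_posSet, Finset.mem_erase, mem_posSet]
        constructor
        · intro ⟨h1, h2⟩
          rw [happ] at h2
          by_cases ha : a = i
          · rw [if_pos ha] at h2; omega
          · rw [if_neg ha] at h2; exact ⟨ha, h1, h2⟩
        · intro ⟨h1, h2, h3⟩
          refine ⟨h2, ?_⟩
          rw [happ, if_neg h1]; exact h3
      have hcard' : (invSet f' N).card + (posSet f' N).card ≤ m := by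
        rw [hinv', hposS]
        have hiP : i ∈ posSet f N := mem_posSet.mpr ⟨hiN, hi⟩
        rw [Finset.card_erase_of_mem hiP]
        have : 0 < (posSet f N).card := Finset.card_pos.mpr ⟨i, hiP⟩
        omega
      obtain ⟨w, hwmem, hs1, hs2, hs3⟩ := ih f' htail' hbound' hdist' hnz' hcard'
      have key : (w * flipAt i) f = w f' := rfl
      exact ⟨w * flipAt i, mul_mem hwmem (flipAt_mem i),
        by rw [key]; exact hs1, by rw [key]; exact hs2, by rw [key]; exact hs3⟩
    · push_neg at hpos
      have hneg : ∀ k, f k < 0 := fun k => lt_of_le_of_ne (hpos k) (hnz k)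
      have hposS : posSet f N = ∅ := by
        rw [Finset.eq_empty_iff_forall_notMem]
        intro a ha
        rw [mem_posSet] at ha
        have := hneg a
        omega
      by_cases hinv0 : invSet f N = ∅
      · obtain ⟨ha, hb, hc⟩ := sorted_of_empty htail hbound hdist hnz hposS hinv0
        exact ⟨1, one_mem _, by simpa using ha, by simpa using hb, by simpa using hc⟩
      · -- find an adjacent inversion
        have hadj : ∃ i, i + 1 < N ∧ |f (i+1)| < |f i| := by
          by_contra hno
          push_neg at hno
          have hmono : ∀ d a, a + d + 1 < N → |f a| < |f (a + d + 1)| := by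
            intro d
            induction d with
            | zero =>
              intro a ha
              have h1 := hno a ha
              have hne : |f a| ≠ |f (a+1)| := fun h => by have := hdist _ _ h; omega
              show |f a| < |f (a+1)|
              omega
            | succ d ihd =>
              intro a ha
              have h1 := ihd a (by omega)
              have h2 := hno (a+d+1) (by omega)
              show |f a| < |f (a+d+1+1)|
              omega
          obtain ⟨p, hp⟩ := Finset.nonempty_of_ne_empty hinv0
          rw [mem_invSet] at hp
          obtain ⟨hp1, hp2, hp3, hp4⟩ := hp
          have := hmono (p.2 - p.1 - 1) p.1 (by omega)
          have e : p.1 + (p.2 - p.1 - 1) + 1 = p.2 := by omega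
          rw [e] at this
          omega
        obtain ⟨i, hiN, hinvi⟩ := hadj
        set τ := Equiv.swap i (i+1) with hτ
        set f' := bcSwap i f with hf'
        have happ : ∀ k, f' k = f (τ k) := fun k => bcSwap_apply i f k
        have hτlt : ∀ k, k < N → τ k < N := by
          intro k hk
          rw [hτ, Equiv.swap_apply_def]
          split_ifs <;> omega
        have hτtail : ∀ k, N ≤ k → τ k = k := by
          intro k hk
          exact Equiv.swap_apply_of_ne_of_ne (by omega) (by omega)
        have htail' : ∀ k, N ≤ k → f' k = bcRho n k := by
          intro k hk; rw [happ, hτtail k hk]; exact htail k hk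
        have hbound' : ∀ a, a < N → |f' a| < (n:ℤ)+1+N := by
          intro a ha; rw [happ]; exact hbound _ (hτlt a ha)
        have hdist' : ∀ a b, |f' a| = |f' b| → a = b := by
          intro a b h
          rw [happ, happ] at h
          exact τ.injective (hdist _ _ h)
        have hnz' : ∀ a, f' a ≠ 0 := by intro a; rw [happ]; exact hnz _
        have hposS' : posSet f' N = ∅ := by
          rw [Finset.eq_empty_iff_forall_notMem]
          intro a ha
          rw [mem_posSet] at ha
          rw [happ] at ha
          have := hneg (τ a)
          omega
        have hmemInv : (i, i+1) ∈ invSet f N := mem_invSet.mpr ⟨by omega, hiN, by omega, hinvi⟩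
        have hcardlt : (invSet f' N).card < (invSet f N).card := by
          have hsub : ∀ p ∈ invSet f' N, (τ p.1, τ p.2) ∈ (invSet f N).erase (i, i+1) := by
            intro p hp
            rw [mem_invSet] at hp
            obtain ⟨hp1, hp2, hp3, hp4⟩ := hp
            rw [happ, happ] at hp4
            have hpne : ¬ (p.1 = i ∧ p.2 = i + 1) := by
              rintro ⟨rfl, h2⟩
              rw [h2] at hp4
              rw [hτ, Equiv.swap_apply_left, Equiv.swap_apply_right] at hp4
              omega
            have hord : τ p.1 < τ p.2 := by
              rw [hτ, Equiv.swap_apply_def, Equiv.swap_apply_def]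
              split_ifs <;> omega
            rw [Finset.mem_erase, mem_invSet]
            refine ⟨?_, hτlt _ hp1, hτlt _ hp2, hord, hp4⟩
            intro hcon
            have h1 : τ p.1 = i := congrArg Prod.fst hcon
            have h2 : τ p.2 = i + 1 := congrArg Prod.snd hcon
            have e1 : p.1 = τ i := by rw [← h1, hτ, Equiv.swap_apply_self]
            have e2 : p.2 = τ (i+1) := by rw [← h2, hτ, Equiv.swap_apply_self]
            rw [hτ, Equiv.swap_apply_left] at e1
            rw [hτ, Equiv.swap_apply_right] at e2
            omega
          have hinj : Set.InjOn (fun p : ℕ × ℕ => (τ p.1, τ p.2)) (invSet f' N) := by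
            intro a _ b _ hab
            have h1 : τ a.1 = τ b.1 := congrArg Prod.fst hab
            have h2 : τ a.2 = τ b.2 := congrArg Prod.snd hab
            exact Prod.ext (τ.injective h1) (τ.injective h2)
          calc (invSet f' N).card ≤ ((invSet f N).erase (i, i+1)).card :=
                Finset.card_le_card_of_injOn _ hsub hinj
            _ < (invSet f N).card := Finset.card_erase_lt_of_mem hmemInv
        have hcard' : (invSet f' N).card + (posSet f' N).card ≤ m := by
          rw [hposS']
          rw [hposS] at hcard
          simp at hcard ⊢
          omega
        obtain ⟨w, hwmem, hs1, hs2, hs3⟩ := ih f' htail' hbound' hdist' hnz' hcard'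
        have key : (w * bcSwap i) f = w f' := rfl
        exact ⟨w * bcSwap i, mul_mem hwmem (bcSwap_mem i),
          by rw [key]; exact hs1, by rw [key]; exact hs2, by rw [key]; exact hs3⟩

/-- For the dot action of the type `BC_∞` Weyl group `W` (with
`ρ = (-(n+1), -(n+2), …)`, so that `s₀ • (a₁, a₂, …) = (2n + 2 - a₁, a₂, …)` and
`sᵢ • (…, aᵢ, a_{i+1}, …) = (…, a_{i+1} - 1, aᵢ + 1, …)`) and for every partition `λ`
(identified with its transpose `λ†`), exactly one of the following holds: either there is a
unique `w ∈ W` such that `w • λ†` is the transpose of a partition with at most `n` parts, or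
some non-identity element `w ∈ W` fixes `λ†` under the dot action. -/
theorem bc_dot_dichotomy (n : ℕ) (l : List ℕ) (hl : IsPartitionL l) :
    Xor'
      (∃! w, w ∈ bcW ∧ IsAdmissibleConj n (bcDot n w (pConjSeq l)))
      (∃ w ∈ bcW, w ≠ 1 ∧ bcDot n w (pConjSeq l) = pConjSeq l) := by
  classical
  set μ : ℕ → ℤ := fun j => pConjSeq l j + bcRho n j with hμ
  have hdot : ∀ (w : Equiv.Perm (ℕ → ℤ)) (k : ℕ),
      bcDot n w (pConjSeq l) k = w μ k - bcRho n k := by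
    intro w k
    rw [hμ]
    rfl
  have hμval : ∀ k, μ k = (pConj l k : ℤ) + bcRho n k := by
    intro k; rw [hμ]; rfl
  have hμanti : ∀ k, μ (k+1) < μ k := by
    intro k
    have h := pConj_succ_le l k
    rw [hμval, hμval]
    simp only [bcRho]
    push_cast
    omega
  have hμinj : Function.Injective μ := (strictAnti_nat_of_succ_lt hμanti).injective
  set N : ℕ := max (pPart l 0) l.length with hN
  have htail : ∀ k, N ≤ k → μ k = bcRho n k := by
    intro k hk
    have h0 : pConj l k = 0 := pConj_zero_of_ge hl.1 (le_trans (le_max_left _ _) hk)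
    rw [hμval, h0]
    simp
  have hbound : ∀ i, i < N → |μ i| < (n:ℤ)+1+N := by
    intro i hi
    have h1 : pConj l i ≤ l.length := pConj_le_length l i
    have h2 : l.length ≤ N := le_max_right _ _
    rw [abs_lt, hμval]
    simp only [bcRho]
    constructor <;> push_cast <;> omega
  by_cases hgood : (∀ i, μ i ≠ 0) ∧ (∀ i j, |μ i| = |μ j| → i = j)
  · obtain ⟨hnz, hdist⟩ := hgood
    left
    constructor
    · -- existence and uniqueness
      obtain ⟨w, hwmem, hs1, hs2, hs3⟩ :=
        sort_exists n N ((invSet μ N).card + (posSet μ N).card) μ htail hbound hdist hnz le_rfl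
      have haux1 : ∀ j k, w μ (k + j) + (j:ℤ) ≤ w μ k := by
        intro j
        induction j with
        | zero => intro k; simp
        | succ j ihj =>
          intro k
          have h1 := hs1 (k+j)
          have h2 := ihj k
          have e : k + (j+1) = (k+j)+1 := rfl
          rw [e]
          push_cast
          push_cast at h2
          omega
      have hadm : IsAdmissibleConj n (bcDot n w (pConjSeq l)) := by
        refine ⟨?_, ?_, ?_, N, ?_⟩
        · intro k
          rw [hdot]
          rcases le_or_gt N k with hk | hk
          · rw [hs3 k hk]; simp
          · have h1 := haux1 (N - k) k
            have e : k + (N - k) = N := by omega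
            rw [e, hs3 N le_rfl] at h1
            simp only [bcRho] at h1 ⊢
            push_cast at h1 ⊢
            omega
        · intro k
          rw [hdot, hdot]
          have h1 := hs1 k
          simp only [bcRho]
          push_cast
          omega
        · intro k
          rw [hdot]
          have h1 := haux1 k 0
          have e : 0 + k = k := by omega
          rw [e] at h1
          have h2 := hs2 0
          simp only [bcRho]
          push_cast at h1 ⊢
          omega
        · intro k hk
          rw [hdot, hs3 k hk]
          ring
      -- uniqueness
      have huniq : ∀ w₁ w₂, w₁ ∈ bcW → w₂ ∈ bcW →
          IsAdmissibleConj n (bcDot n w₁ (pConjSeq l)) →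
          IsAdmissibleConj n (bcDot n w₂ (pConjSeq l)) → w₁ = w₂ := by
        intro w₁ w₂ hm1 hm2 ha1 ha2
        obtain ⟨σ₁, ε₁, he₁⟩ := bcW_isSigned hm1
        obtain ⟨σ₂, ε₂, he₂⟩ := bcW_isSigned hm2
        have hnu : ∀ (w₀ : Equiv.Perm (ℕ → ℤ)) (σ₀ : Equiv.Perm ℕ) (ε₀ : ℕ → ℤˣ),
            (∀ f k, w₀ f k = (ε₀ k : ℤ) * f (σ₀ k)) →
            IsAdmissibleConj n (bcDot n w₀ (pConjSeq l)) →
            StrictMono (fun k => -(w₀ μ k)) ∧ (∀ k, (fun k => -(w₀ μ k)) k = |μ (σ₀ k)|) := by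
          intro w₀ σ₀ ε₀ he₀ ha₀
          obtain ⟨ha, hb, hc, Nx, hd⟩ := ha₀
          have hpos : ∀ k, 0 < -(w₀ μ k) := by
            intro k
            have h1 := hc k
            rw [hdot] at h1
            simp only [bcRho] at h1
            push_cast at h1
            omega
          constructor
          · apply strictMono_nat_of_lt_succ
            intro k
            have h1 := hb k
            rw [hdot, hdot] at h1
            simp only [bcRho] at h1
            push_cast at h1
            omega
          · intro k
            have h1 : w₀ μ k = (ε₀ k : ℤ) * μ (σ₀ k) := he₀ μ k
            have h2 : |(ε₀ k : ℤ)| = 1 := by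
              rcases Int.units_eq_one_or (ε₀ k) with h | h <;> rw [h] <;> simp
            have h3 : |(-(w₀ μ k))| = |μ (σ₀ k)| := by
              rw [abs_neg, h1, abs_mul, h2, one_mul]
            have h4 := hpos k
            simp only
            rw [← h3, abs_of_pos h4]
        obtain ⟨hsm1, hv1⟩ := hnu w₁ σ₁ ε₁ he₁ ha1
        obtain ⟨hsm2, hv2⟩ := hnu w₂ σ₂ ε₂ he₂ ha2
        have hrange : Set.range (fun k => -(w₁ μ k)) = Set.range (fun k => -(w₂ μ k)) := by
          have r1 : Set.range (fun k => -(w₁ μ k)) = Set.range (fun i => |μ i|) := by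
            have : (fun k => -(w₁ μ k)) = (fun i => |μ i|) ∘ σ₁ := funext hv1
            rw [this, Set.range_comp, Equiv.range_eq_univ, Set.image_univ]
          have r2 : Set.range (fun k => -(w₂ μ k)) = Set.range (fun i => |μ i|) := by
            have : (fun k => -(w₂ μ k)) = (fun i => |μ i|) ∘ σ₂ := funext hv2
            rw [this, Set.range_comp, Equiv.range_eq_univ, Set.image_univ]
          rw [r1, r2]
        have hval : ∀ k, w₁ μ k = w₂ μ k := by
          intro k
          have := congrFun (strictMono_range_eq hsm1 hsm2 hrange) k
          omega
        have hσ : ∀ k, σ₁ k = σ₂ k := by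
          intro k
          apply hdist
          have h1 := hval k
          rw [he₁ μ k, he₂ μ k] at h1
          have e1 : |(ε₁ k : ℤ)| = 1 := by
            rcases Int.units_eq_one_or (ε₁ k) with h | h <;> rw [h] <;> simp
          have e2 : |(ε₂ k : ℤ)| = 1 := by
            rcases Int.units_eq_one_or (ε₂ k) with h | h <;> rw [h] <;> simp
          calc |μ (σ₁ k)| = |(ε₁ k : ℤ) * μ (σ₁ k)| := by rw [abs_mul, e1, one_mul]
            _ = |(ε₂ k : ℤ) * μ (σ₂ k)| := by rw [h1]
            _ = |μ (σ₂ k)| := by rw [abs_mul, e2, one_mul]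
        have hε : ∀ k, (ε₁ k : ℤ) = (ε₂ k : ℤ) := by
          intro k
          have h1 := hval k
          rw [he₁ μ k, he₂ μ k, hσ k] at h1
          exact mul_right_cancel₀ (hnz (σ₂ k)) h1
        apply Equiv.ext
        intro f
        funext k
        rw [he₁ f k, he₂ f k, hσ k, hε k]
      refine ⟨w, ⟨hwmem, hadm⟩, ?_⟩
      rintro w' ⟨hw'mem, hadm'⟩
      exact huniq w' w hw'mem hwmem hadm' hadm
    · -- no nontrivial fixer
      rintro ⟨w0, hw0m, hw0ne, hw0fix⟩
      obtain ⟨σ, ε, he⟩ := bcW_isSigned hw0m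
      have hfixμ : ∀ k, w0 μ k = μ k := by
        intro k
        have h1 := congrFun hw0fix k
        rw [hdot] at h1
        have h2 := hμval k
        have h3 : pConjSeq l k = (pConj l k : ℤ) := rfl
        rw [h3] at h1
        omega
      have hσ : ∀ k, σ k = k := by
        intro k
        apply hdist
        have h1 := hfixμ k
        rw [he μ k] at h1
        have e1 : |(ε k : ℤ)| = 1 := by
          rcases Int.units_eq_one_or (ε k) with h | h <;> rw [h] <;> simp
        calc |μ (σ k)| = |(ε k : ℤ) * μ (σ k)| := by rw [abs_mul, e1, one_mul]
          _ = |μ k| := by rw [h1]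
      have hε : ∀ k, (ε k : ℤ) = 1 := by
        intro k
        have h1 := hfixμ k
        rw [he μ k, hσ k] at h1
        have hk := hnz k
        rcases Int.units_eq_one_or (ε k) with h | h
        · rw [h]; simp
        · rw [h] at h1
          simp at h1
          omega
      apply hw0ne
      apply Equiv.ext
      intro f
      funext k
      rw [he f k, hσ k, hε k]
      simp
  · -- bad case: nontrivial fixer exists
    right
    have hfix : ∃ w ∈ bcW, w ≠ 1 ∧ w μ = μ := by
      by_cases hz : ∃ i, μ i = 0
      · obtain ⟨i, hi⟩ := hz
        exact zero_fixer hi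
      · push_neg at hz
        have hpair : ∃ i j, i < j ∧ |μ i| = |μ j| := by
          by_contra hno
          push_neg at hno
          apply hgood
          refine ⟨hz, ?_⟩
          intro i j hij
          by_contra hne
          rcases Nat.lt_or_ge i j with h | h
          · exact absurd hij (hno i j h)
          · have h' : j < i := by omega
            exact absurd hij.symm (hno j i h')
        obtain ⟨i, j, hij, habs⟩ := hpair
        have hsum : μ i = -μ j := by
          rcases abs_eq_abs.mp habs with h | h
          · exact absurd (hμinj h) (by omega)
          · exact h
        exact pair_fixer hij (hz i) hsum
    obtain ⟨w0, hw0m, hw0ne, hw0fix⟩ := hfix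
    have hdotfix : bcDot n w0 (pConjSeq l) = pConjSeq l := by
      funext k
      rw [hdot, hw0fix]
      rw [hμval]
      simp [pConjSeq]
    constructor
    · exact ⟨w0, hw0m, hw0ne, hdotfix⟩
    · rintro ⟨w₁, ⟨hm1, hadm1⟩, huq⟩
      have hmem2 : w₁ * w0 ∈ bcW := mul_mem hm1 hw0m
      have hadm2 : IsAdmissibleConj n (bcDot n (w₁ * w0) (pConjSeq l)) := by
        rw [bcDot_mul, hdotfix]
        exact hadm1
      have heq := huq (w₁ * w0) ⟨hmem2, hadm2⟩
      have heq1 := huq w₁ ⟨hm1, hadm1⟩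
      have : w₁ * w0 = w₁ * 1 := by rw [mul_one, heq, heq1]
      exact hw0ne (mul_left_cancel this)
end

section
/- Let n ≥ 0 and let λ be a partition with ℓ(λ) > n. Define the symplectic modification rule: remove from λ the border strip R_λ of size 2(ℓ(λ) − n − 1) starting at the first box of the final row, if it exists and yields a partition. Then removing R_λ is equivalent to the following hook operation: there is a box b in the first column of λ whose hook length equals 2(ℓ(λ) − n − 1), and λ \ R_λ equals the partition obtained by removing the hook of b and shifting all boxes below this hook one step in the northwest direction; moreover, the border strips R of λ starting at the last box of the first column with λ \ R a partition are in bijection with the boxes of the first column of λ, the strip corresponding to box b having the same size as the hook of b. -/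
/-- Two boxes of a Young diagram are adjacent if they share an edge. -/
def BoxAdj (a b : ℕ × ℕ) : Prop :=
  (a.1 = b.1 ∧ (a.2 = b.2 + 1 ∨ b.2 = a.2 + 1)) ∨
  (a.2 = b.2 ∧ (a.1 = b.1 + 1 ∨ b.1 = a.1 + 1))

/-- A finite set of boxes is a border strip if it is edge-connected and contains no
`2 × 2` square. (It is applied below to skew diagrams `λ \ μ`.) -/
def IsBorderStrip (R : Finset (ℕ × ℕ)) : Prop :=
  (∀ a ∈ R, ∀ b ∈ R, Relation.ReflTransGen (fun x y => x ∈ R ∧ y ∈ R ∧ BoxAdj x y) a b) ∧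
  ¬∃ i j, (i, j) ∈ R ∧ (i + 1, j) ∈ R ∧ (i, j + 1) ∈ R ∧ (i + 1, j + 1) ∈ R

/-- The hook length of the box `(i, j)` of `μ`: the number of boxes directly to the right of
or directly below `(i, j)`, including the box itself. -/
def hookLen (μ : YoungDiagram) (i j : ℕ) : ℕ :=
  (μ.rowLen i - j) + (μ.colLen j - i) - 1

/-- The topmost row met by a set of boxes. -/
noncomputable def topRow (R : Finset (ℕ × ℕ)) : ℕ := sInf {i | ∃ j, (i, j) ∈ R}

namespace BSAux

open YoungDiagram Finset

lemma boxAdj_symm : Symmetric BoxAdj := by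
  rintro ⟨a1,a2⟩ ⟨b1,b2⟩ h
  unfold BoxAdj at *
  simp only at *
  omega

lemma rowLen_eq (ν : YoungDiagram) (i m : ℕ) (h : ∀ j, (i, j) ∈ ν ↔ j < m) :
    ν.rowLen i = m := by
  rcases Nat.lt_trichotomy (ν.rowLen i) m with h' | h' | h'
  · have := (h (ν.rowLen i)).mpr h'
    rw [mem_iff_lt_rowLen] at this; omega
  · exact h'
  · have := (h m).mp (mem_iff_lt_rowLen.mpr h'); omega

lemma rowLen_le_of_le {lam nu : YoungDiagram} (hsub : nu ≤ lam) (i : ℕ) :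
    nu.rowLen i ≤ lam.rowLen i := by
  by_contra h
  push_neg at h
  have : (i, lam.rowLen i) ∈ nu := mem_iff_lt_rowLen.mpr h
  have : (i, lam.rowLen i) ∈ lam := hsub this
  rw [mem_iff_lt_rowLen] at this; omega

lemma rowLen_eq_zero_of_le {lam : YoungDiagram} {i : ℕ} (h : lam.colLen 0 ≤ i) :
    lam.rowLen i = 0 := by
  by_contra h'
  have : (i, 0) ∈ lam := mem_iff_lt_rowLen.mpr (Nat.pos_of_ne_zero h')
  rw [mem_iff_lt_colLen] at this; omega

lemma mem_diff_iff {lam nu : YoungDiagram} {i j : ℕ} :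
    (i, j) ∈ lam.cells \ nu.cells ↔ nu.rowLen i ≤ j ∧ j < lam.rowLen i := by
  simp only [Finset.mem_sdiff, mem_cells, mem_iff_lt_rowLen, not_lt]
  tauto

lemma row_lt_of_mem {lam : YoungDiagram} {i j : ℕ} (h : (i, j) ∈ lam) :
    i < lam.colLen 0 := by
  rw [← mem_iff_lt_colLen]
  exact lam.up_left_mem le_rfl (Nat.zero_le _) h

/-- crossing lemma -/
lemma crossing {R : Finset (ℕ × ℕ)} {a b : ℕ × ℕ}
    (h : Relation.ReflTransGen (fun x y => x ∈ R ∧ y ∈ R ∧ BoxAdj x y) a b)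
    (i : ℕ) (ha : a.1 ≤ i) (hb : i < b.1) :
    ∃ j, (i, j) ∈ R ∧ (i + 1, j) ∈ R := by
  induction h with
  | refl => omega
  | @tail c b hac hstep ih =>
    by_cases hc : i < c.1
    · exact ih hc
    · push_neg at hc
      obtain ⟨hcR, hbR, hadj⟩ := hstep
      have hrow : c.1 = i ∧ b.1 = i + 1 := by
        rcases hadj with ⟨h1, _⟩ | ⟨_, h1⟩ <;> omega
      have hcol : c.2 = b.2 := by
        rcases hadj with ⟨h1, _⟩ | ⟨h1, _⟩ <;> omega
      refine ⟨b.2, ?_, ?_⟩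
      · have : (i, b.2) = c := by
          rw [Prod.ext_iff]; exact ⟨hrow.1.symm, hcol.symm⟩
        rwa [this]
      · have : (i + 1, b.2) = b := by
          rw [Prod.ext_iff]; exact ⟨hrow.2.symm, rfl⟩
        rwa [this]


lemma lemA (lam nu : YoungDiagram) (hsub : nu ≤ lam)
    (hBS : IsBorderStrip (lam.cells \ nu.cells))
    (hstart : (lam.colLen 0 - 1, 0) ∈ lam.cells \ nu.cells) :
    (topRow (lam.cells \ nu.cells), 0) ∈ lam ∧
    (lam.cells \ nu.cells).card = hookLen lam (topRow (lam.cells \ nu.cells)) 0 ∧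
    ∀ i, nu.rowLen i = if i < topRow (lam.cells \ nu.cells) then lam.rowLen i
        else lam.rowLen (i + 1) - 1 := by
  classical
  set ℓ : ℕ := lam.colLen 0 with hℓ
  set S : Finset (ℕ × ℕ) := lam.cells \ nu.cells with hS
  set T : Set ℕ := {i | ∃ j, (i, j) ∈ S} with hT
  have hℓpos : 1 ≤ ℓ := by
    have := (Finset.mem_sdiff.mp hstart).1
    rw [mem_cells, mem_iff_lt_colLen] at this
    omega
  have hTne : T.Nonempty := ⟨ℓ - 1, 0, hstart⟩
  set r : ℕ := topRow S with hr
  have hrT : r ∈ T := Nat.sInf_mem hTne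
  have hrle : r ≤ ℓ - 1 := Nat.sInf_le ⟨0, hstart⟩
  obtain ⟨jr, hjr⟩ := hrT
  have hr0 : (r, 0) ∈ lam := by
    have := (Finset.mem_sdiff.mp hjr).1
    exact lam.up_left_mem le_rfl (Nat.zero_le _) this
  have key : ∀ i, r ≤ i → i + 1 ≤ ℓ - 1 → lam.rowLen (i + 1) = nu.rowLen i + 1 := by
    intro i hi1 hi2
    have hpath := hBS.1 (r, jr) hjr (ℓ - 1, 0) hstart
    obtain ⟨j, hj1, hj2⟩ := crossing hpath i (by simpa using hi1) (by simp; omega)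
    rw [hS, mem_diff_iff] at hj1 hj2
    have h1 : nu.rowLen i ≤ j := hj1.1
    have h2 : j < lam.rowLen (i + 1) := hj2.2
    have h3 : ¬ (nu.rowLen i + 1 < lam.rowLen (i + 1)) := by
      intro hcon
      apply hBS.2
      have e1 := lam.rowLen_anti i (i + 1) (by omega)
      have e2 := nu.rowLen_anti i (i + 1) (by omega)
      exact ⟨i, nu.rowLen i, mem_diff_iff.mpr (by omega), mem_diff_iff.mpr (by omega),
        mem_diff_iff.mpr (by omega), mem_diff_iff.mpr (by omega)⟩
    omega
  have hlast : nu.rowLen (ℓ - 1) = 0 := by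
    have := ((mem_diff_iff (lam := lam) (nu := nu)).mp hstart).1
    omega
  have hLℓ : ∀ i, ℓ ≤ i → lam.rowLen i = 0 := fun i hi => rowLen_eq_zero_of_le hi
  have hNform : ∀ i, nu.rowLen i = if i < r then lam.rowLen i else lam.rowLen (i + 1) - 1 := by
    intro i
    by_cases hir : i < r
    · simp only [if_pos hir]
      have hnot : i ∉ T := by
        intro hmem
        have h0 : sInf T ≤ i := Nat.sInf_le hmem
        have h0' : r ≤ i := h0
        omega
      have h1 : ¬ ∃ j, nu.rowLen i ≤ j ∧ j < lam.rowLen i := by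
        intro ⟨j, hj⟩
        exact hnot ⟨j, (mem_diff_iff (lam := lam) (nu := nu)).mpr hj⟩
      push_neg at h1
      have h2 := h1 (nu.rowLen i)
      have h3 := rowLen_le_of_le hsub i
      omega
    · simp only [if_neg hir]
      push_neg at hir
      rcases Nat.lt_trichotomy (i + 1) ℓ with h | h | h
      · have := key i hir (by omega)
        omega
      · have hi : i = ℓ - 1 := by omega
        rw [hi, hlast]
        have := hLℓ (ℓ - 1 + 1) (by omega)
        omega
      · have h1 := hLℓ i (by omega)
        have h2 := hLℓ (i + 1) (by omega)
        have h3 := rowLen_le_of_le hsub i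
        omega
  refine ⟨hr0, ?_, hNform⟩
  -- cardinality
  have hSrep : S = (Finset.range ℓ).biUnion
      (fun i => (Finset.Ico (nu.rowLen i) (lam.rowLen i)).image (fun j => (i, j))) := by
    ext ⟨a, b⟩
    simp only [Finset.mem_biUnion, Finset.mem_range, Finset.mem_image, Finset.mem_Ico,
      Prod.mk.injEq]
    constructor
    · intro h
      have hm := (mem_diff_iff (lam := lam) (nu := nu)).mp h
      have ha : a < ℓ := row_lt_of_mem ((Finset.mem_sdiff.mp h).1)
      exact ⟨a, ha, b, ⟨hm.1, hm.2⟩, rfl, rfl⟩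
    · rintro ⟨i, hi, j, hj, rfl, rfl⟩
      exact (mem_diff_iff (lam := lam) (nu := nu)).mpr ⟨hj.1, hj.2⟩
  have hcard : S.card = ∑ i ∈ Finset.range ℓ, (lam.rowLen i - nu.rowLen i) := by
    rw [hSrep, Finset.card_biUnion]
    · apply Finset.sum_congr rfl
      intro i _
      rw [Finset.card_image_of_injective _ (fun x y h => by simpa using h), Nat.card_Ico]
    · intro x _ y _ hxy
      simp only [Finset.disjoint_left, Finset.mem_image]
      rintro a ⟨j, _, rfl⟩ ⟨j', _, h⟩
      exact hxy (by simpa using (Prod.ext_iff.mp h).1.symm)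
  have hsum : ∀ d k, r ≤ k → k < ℓ → ℓ - 1 - k ≤ d →
      ∑ i ∈ Finset.Ico k ℓ, (lam.rowLen i - nu.rowLen i)
        = lam.rowLen k + (ℓ - 1 - k) := by
    intro d
    induction d with
    | zero =>
      intro k hk1 hk2 hk3
      have hkk : k = ℓ - 1 := by omega
      subst hkk
      have hico : Finset.Ico (ℓ - 1) ℓ = {ℓ - 1} := by
        ext x
        simp only [Finset.mem_Ico, Finset.mem_singleton]
        omega
      rw [hico, Finset.sum_singleton, hlast]
      omega
    | succ d ih =>
      intro k hk1 hk2 hk3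
      by_cases hk : k = ℓ - 1
      · subst hk
        have hico : Finset.Ico (ℓ - 1) ℓ = {ℓ - 1} := by
          ext x
          simp only [Finset.mem_Ico, Finset.mem_singleton]
          omega
        rw [hico, Finset.sum_singleton, hlast]
        omega
      · rw [Finset.sum_eq_sum_Ico_succ_bot hk2]
        rw [ih (k + 1) (by omega) (by omega) (by omega)]
        have h1 := key k hk1 (by omega)
        have h2 := lam.rowLen_anti k (k + 1) (by omega)
        have hNk := hNform k
        rw [if_neg (by omega)] at hNk
        omega
  have hsplit : ∑ i ∈ Finset.range ℓ, (lam.rowLen i - nu.rowLen i)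
      = ∑ i ∈ Finset.Ico r ℓ, (lam.rowLen i - nu.rowLen i) := by
    rw [Finset.range_eq_Ico, ← Finset.sum_Ico_consecutive _ (Nat.zero_le r) (by omega)]
    have : ∑ i ∈ Finset.Ico 0 r, (lam.rowLen i - nu.rowLen i) = 0 := by
      apply Finset.sum_eq_zero
      intro i hi
      rw [Finset.mem_Ico] at hi
      have := hNform i
      rw [if_pos hi.2] at this
      omega
    omega
  rw [hcard, hsplit, hsum (ℓ - 1 - r) r le_rfl (by omega) le_rfl]
  have hLr : 1 ≤ lam.rowLen r := by
    exact mem_iff_lt_rowLen.mp hr0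
  unfold hookLen
  rw [← hℓ]
  omega


/-- The hook-removal diagram for first-column box `(r,0)`. -/
def nuOf (lam : YoungDiagram) (r : ℕ) : YoungDiagram where
  cells := lam.cells.filter (fun c => c.1 < r ∨ c.2 + 1 < lam.rowLen (c.1 + 1))
  isLowerSet := by
    intro a b hle ha
    simp only [Finset.coe_filter, Set.mem_setOf_eq, Finset.mem_coe, mem_cells] at ha ⊢
    have h1 : b.1 ≤ a.1 := hle.1
    have h2 : b.2 ≤ a.2 := hle.2
    refine ⟨lam.isLowerSet hle ha.1, ?_⟩
    rcases ha.2 with h | h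
    · left; omega
    · by_cases hb : b.1 < r
      · left; exact hb
      · right
        have := lam.rowLen_anti (b.1 + 1) (a.1 + 1) (by omega)
        omega

lemma nuOf_le (lam : YoungDiagram) (r : ℕ) : nuOf lam r ≤ lam := by
  intro c hc
  exact (Finset.mem_filter.mp hc).1

lemma mem_nuOf {lam : YoungDiagram} {r i j : ℕ} :
    (i, j) ∈ nuOf lam r ↔ (i, j) ∈ lam ∧ (i < r ∨ j + 1 < lam.rowLen (i + 1)) := by
  constructor
  · intro h
    exact Finset.mem_filter.mp h
  · intro h
    exact Finset.mem_filter.mpr h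

lemma rowLen_nuOf (lam : YoungDiagram) (r i : ℕ) :
    (nuOf lam r).rowLen i = if i < r then lam.rowLen i else lam.rowLen (i + 1) - 1 := by
  apply rowLen_eq
  intro j
  rw [mem_nuOf, mem_iff_lt_rowLen]
  by_cases hir : i < r
  · simp only [if_pos hir]
    tauto
  · simp only [if_neg hir]
    have := lam.rowLen_anti i (i + 1) (by omega)
    omega

lemma mem_diff_nuOf {lam : YoungDiagram} {r i j : ℕ} :
    (i, j) ∈ lam.cells \ (nuOf lam r).cells ↔
      j < lam.rowLen i ∧ r ≤ i ∧ lam.rowLen (i + 1) ≤ j + 1 := by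
  have hanti := lam.rowLen_anti i (i + 1) (by omega)
  rw [Finset.mem_sdiff, mem_cells, mem_cells, mem_nuOf, mem_iff_lt_rowLen]
  omega

lemma rtg_toEnd (lam : YoungDiagram) (r : ℕ) :
    ∀ m i j, (lam.colLen 0 - 1 - i) + j ≤ m → (i, j) ∈ lam.cells \ (nuOf lam r).cells →
      Relation.ReflTransGen
        (fun x y => x ∈ lam.cells \ (nuOf lam r).cells ∧
          y ∈ lam.cells \ (nuOf lam r).cells ∧ BoxAdj x y)
        (i, j) (lam.colLen 0 - 1, 0) := by
  set ℓ : ℕ := lam.colLen 0 with hℓ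
  intro m
  induction m with
  | zero =>
    intro i j hm hmem
    have h1 := mem_diff_nuOf.mp hmem
    have h2 : i < ℓ := by
      rw [hℓ, ← mem_iff_lt_colLen]
      exact lam.up_left_mem le_rfl (Nat.zero_le _) ((Finset.mem_sdiff.mp hmem).1)
    have : i = ℓ - 1 ∧ j = 0 := by omega
    rw [this.1, this.2]
  | succ m ih =>
    intro i j hm hmem
    have h1 := mem_diff_nuOf.mp hmem
    have h2 : i < ℓ := by
      rw [hℓ, ← mem_iff_lt_colLen]
      exact lam.up_left_mem le_rfl (Nat.zero_le _) ((Finset.mem_sdiff.mp hmem).1)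
    by_cases hend : i = ℓ - 1 ∧ j = 0
    · rw [hend.1, hend.2]
    · -- choose a move
      by_cases hi : i = ℓ - 1
      · -- move left
        have hj : 1 ≤ j := by
          rcases Nat.eq_zero_or_pos j with h | h
          · exact absurd ⟨hi, h⟩ hend
          · exact h
        have hLnext : lam.rowLen (i + 1) = 0 :=
          rowLen_eq_zero_of_le (by omega)
        have hmem' : (i, j - 1) ∈ lam.cells \ (nuOf lam r).cells := by
          rw [mem_diff_nuOf]
          refine ⟨by omega, h1.2.1, by omega⟩
        refine Relation.ReflTransGen.head ⟨hmem, hmem', ?_⟩ (ih i (j - 1) (by omega) hmem')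
        left; exact ⟨rfl, Or.inl (by omega)⟩
      · -- i < ℓ - 1
        have hiℓ : i < ℓ - 1 := by omega
        have hLpos : 1 ≤ lam.rowLen (i + 1) := by
          have : (i + 1, 0) ∈ lam := mem_iff_lt_colLen.mpr (by omega)
          exact mem_iff_lt_rowLen.mp this
        by_cases hjl : lam.rowLen (i + 1) ≤ j
        · -- move left
          have hj : 1 ≤ j := by omega
          have hmem' : (i, j - 1) ∈ lam.cells \ (nuOf lam r).cells := by
            rw [mem_diff_nuOf]
            exact ⟨by omega, h1.2.1, by omega⟩
          refine Relation.ReflTransGen.head ⟨hmem, hmem', ?_⟩ (ih i (j - 1) (by omega) hmem')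
          left; exact ⟨rfl, Or.inl (by omega)⟩
        · -- move down: here lam.rowLen (i+1) = j + 1
          have hLj : lam.rowLen (i + 1) = j + 1 := by omega
          have hmem' : (i + 1, j) ∈ lam.cells \ (nuOf lam r).cells := by
            rw [mem_diff_nuOf]
            have := lam.rowLen_anti (i + 1) (i + 1 + 1) (by omega)
            exact ⟨by omega, by omega, by omega⟩
          refine Relation.ReflTransGen.head ⟨hmem, hmem', ?_⟩
            (ih (i + 1) j (by omega) hmem')
          right; exact ⟨rfl, Or.inr rfl⟩

lemma lemB (lam : YoungDiagram) (r : ℕ) (hr : (r, 0) ∈ lam) :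
    nuOf lam r ≤ lam ∧ IsBorderStrip (lam.cells \ (nuOf lam r).cells) ∧
      (lam.colLen 0 - 1, 0) ∈ lam.cells \ (nuOf lam r).cells ∧
      topRow (lam.cells \ (nuOf lam r).cells) = r := by
  set ℓ : ℕ := lam.colLen 0 with hℓ
  have hrℓ : r < ℓ := mem_iff_lt_colLen.mp hr
  have hstart : (ℓ - 1, 0) ∈ lam.cells \ (nuOf lam r).cells := by
    rw [mem_diff_nuOf]
    have h1 : (ℓ - 1, 0) ∈ lam := mem_iff_lt_colLen.mpr (by omega)
    have h2 := rowLen_eq_zero_of_le (lam := lam) (i := ℓ - 1 + 1) (by omega)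
    exact ⟨mem_iff_lt_rowLen.mp h1, by omega, by omega⟩
  refine ⟨nuOf_le lam r, ⟨?_, ?_⟩, hstart, ?_⟩
  · -- connectivity
    intro a ha b hb
    obtain ⟨ai, aj⟩ := a
    obtain ⟨bi, bj⟩ := b
    have hA := rtg_toEnd lam r ((ℓ - 1 - ai) + aj) ai aj le_rfl ha
    have hB := rtg_toEnd lam r ((ℓ - 1 - bi) + bj) bi bj le_rfl hb
    have hsymm : Symmetric (fun x y => x ∈ lam.cells \ (nuOf lam r).cells ∧
        y ∈ lam.cells \ (nuOf lam r).cells ∧ BoxAdj x y) := by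
      intro x y ⟨h1, h2, h3⟩
      exact ⟨h2, h1, boxAdj_symm h3⟩
    exact hA.trans (@Std.Symm.symm _ _ (@Relation.ReflTransGen.stdSymm _ _ ⟨fun _ _ h => hsymm h⟩) _ _ hB)
  · -- no 2x2
    rintro ⟨i, j, h1, h2, h3, h4⟩
    rw [mem_diff_nuOf] at h1 h2 h3 h4
    omega
  · -- topRow = r
    apply le_antisymm
    · apply Nat.sInf_le
      refine ⟨lam.rowLen r - 1, ?_⟩
      rw [mem_diff_nuOf]
      have hLr : 1 ≤ lam.rowLen r := mem_iff_lt_rowLen.mp hr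
      have := lam.rowLen_anti r (r + 1) (by omega)
      exact ⟨by omega, le_rfl, by omega⟩
    · have hne2 : {i | ∃ j, (i, j) ∈ lam.cells \ (nuOf lam r).cells}.Nonempty :=
        ⟨ℓ - 1, 0, hstart⟩
      apply le_csInf hne2
      rintro b ⟨j, hj⟩
      exact (mem_diff_nuOf.mp hj).2.1


lemma eq_of_rowLen (μ ν : YoungDiagram) (h : ∀ i, μ.rowLen i = ν.rowLen i) : μ = ν := by
  ext ⟨i, j⟩
  rw [mem_cells, mem_cells, mem_iff_lt_rowLen, mem_iff_lt_rowLen, h i]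

end BSAux

/-- Let `λ` be a partition with `ℓ(λ) > n` and suppose the symplectic
modification rule applies: the border strip `R_λ = λ \ μ` of size `2(ℓ(λ) - n - 1)`,
starting at the first box of the final row of `λ` (equivalently, the last box of the first
column), exists, is nonempty, and `μ = λ \ R_λ` is a partition.  Then:
(a) there is a box `b = (r, 0)` in the first column of `λ` whose hook length equals
`2(ℓ(λ) - n - 1)`, and `λ \ R_λ` is obtained by removing the hook of `b` and shifting all
boxes below the hook one step northwest (i.e. row `i` of `μ` has length `λ_{i+1}` for
`i < r` and `λ_{i+2} - 1` for `i ≥ r`);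
(b) the border strips `R` of `λ` starting at the last box of the first column with `λ \ R` a
partition are in bijection with the boxes of the first column of `λ` (`R ↦` the box in the
row where `R` ends), the strip corresponding to the box `(r,0)` having size equal to the hook
length of `(r,0)` and removal given by the hook-removal formula. -/
theorem borderStrip_eq_hookRemoval (n : ℕ) (lam mu : YoungDiagram)
    (hlen : n < lam.colLen 0) (hsub : mu ≤ lam)
    (hBS : IsBorderStrip (lam.cells \ mu.cells))
    (hstart : (lam.colLen 0 - 1, 0) ∈ lam.cells \ mu.cells)
    (hsize : (lam.cells \ mu.cells).card = 2 * (lam.colLen 0 - n - 1))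
    (hne : lam.cells \ mu.cells ≠ ∅) :
    (∃ r, (r, 0) ∈ lam ∧ hookLen lam r 0 = 2 * (lam.colLen 0 - n - 1) ∧
      (∀ i, mu.rowLen i = if i < r then lam.rowLen i else lam.rowLen (i + 1) - 1)) ∧
    (∀ r, (r, 0) ∈ lam →
      ∃! nu : YoungDiagram, nu ≤ lam ∧ IsBorderStrip (lam.cells \ nu.cells) ∧
        (lam.colLen 0 - 1, 0) ∈ lam.cells \ nu.cells ∧
        topRow (lam.cells \ nu.cells) = r) ∧
    (∀ r, (r, 0) ∈ lam → ∀ nu : YoungDiagram, nu ≤ lam →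
      IsBorderStrip (lam.cells \ nu.cells) →
      (lam.colLen 0 - 1, 0) ∈ lam.cells \ nu.cells →
      topRow (lam.cells \ nu.cells) = r →
      (lam.cells \ nu.cells).card = hookLen lam r 0 ∧
      (∀ i, nu.rowLen i = if i < r then lam.rowLen i else lam.rowLen (i + 1) - 1)) := by
  obtain ⟨hr0, hcard, hform⟩ := BSAux.lemA lam mu hsub hBS hstart
  refine ⟨⟨topRow (lam.cells \ mu.cells), hr0, by rw [← hcard]; exact hsize, hform⟩, ?_, ?_⟩
  · intro r hr
    obtain ⟨hle, hbs, hst, htr⟩ := BSAux.lemB lam r hr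
    refine ⟨BSAux.nuOf lam r, ⟨hle, hbs, hst, htr⟩, ?_⟩
    rintro y ⟨hy1, hy2, hy3, hy4⟩
    obtain ⟨_, _, hyform⟩ := BSAux.lemA lam y hy1 hy2 hy3
    apply BSAux.eq_of_rowLen
    intro i
    rw [hyform i, hy4, BSAux.rowLen_nuOf]
  · intro r hr nu hle hbs hst htr
    obtain ⟨_, hc, hf⟩ := BSAux.lemA lam nu hle hbs hst
    rw [htr] at hc hf
    exact ⟨hc, hf⟩
end

section
/- Let n ≥ 1. For partitions λ, the symplectic modification rule via border strips agrees with the rule via the Weyl group of type BC_∞: for any partition λ with ℓ(λ) > n, if R_λ is the border strip of size 2(ℓ(λ) − n − 1) starting at the first box of the final row of λ, with c columns, and λ \ R_λ is a partition, then (s_{c−1} s_{c−2} ⋯ s_1 s_0) • λ† equals (λ \ R_λ)†, where • is the dot action with ρ = (−(n+1), −(n+2), …), s_0 • (a_1, a_2, …) = (2n + 2 − a_1, a_2, …), and s_i swaps-and-shifts coordinates i, i+1 via s_i • (…, a_i, a_{i+1}, …) = (…, a_{i+1} − 1, a_i + 1, …). -/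
/-! ### Partitions as integer sequences, the dot action, and border strips -/

/-- `ρ = (-1, -2, -3, …)`. -/
def seqRho (k : ℕ) : ℤ := -((k : ℤ) + 1)

/-- A permutation of `ℕ` acting on integer sequences by permuting positions:
`(w · f) k = f (w⁻¹ k)`. -/
def permSeq (w : Equiv.Perm ℕ) (f : ℕ → ℤ) : ℕ → ℤ := fun k => f (w.symm k)

/-- The dot action `w • f = w(f + ρ) - ρ` of the infinite symmetric group on integer
sequences, with `ρ = (-1, -2, …)`. -/
def dotP (w : Equiv.Perm ℕ) (f : ℕ → ℤ) : ℕ → ℤ :=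
  fun k => permSeq w (fun j => f j + seqRho j) k - seqRho k

/-- `w` is finitely supported (an element of the infinite symmetric group `𝔖`). -/
def FinPerm (w : Equiv.Perm ℕ) : Prop := {i | w i ≠ i}.Finite

/-- The Coxeter length of `w`: its number of inversions. -/
noncomputable def coxLen (w : Equiv.Perm ℕ) : ℕ :=
  Set.ncard {p : ℕ × ℕ | p.1 < p.2 ∧ w p.2 < w p.1}

/-- `f` is (the sequence of parts of) a partition: nonnegative, weakly decreasing, and
eventually zero. -/
def IsPartSeq (f : ℕ → ℤ) : Prop :=
  (∀ k, 0 ≤ f k) ∧ (∀ k, f (k + 1) ≤ f k) ∧ ∃ N, ∀ k ≥ N, f k = 0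

/-- `f` is regular for the dot action: some (necessarily unique) finitely supported `w`
makes `w • f` a partition. -/
def RegSeq (f : ℕ → ℤ) : Prop := ∃ w, FinPerm w ∧ IsPartSeq (dotP w f)

/-- The sequence of parts of a partition given as a list. -/
def seqOf (l : List ℕ) : ℕ → ℤ := fun k => (pPart l k : ℤ)

/-- The concatenated sequence `(λ |_n μ) = (λ_1, …, λ_n, μ_1, μ_2, …)`. -/
def catSeq (n : ℕ) (l m : List ℕ) : ℕ → ℤ :=
  fun k => if k < n then (pPart l k : ℤ) else (pPart m (k - n) : ℤ)

/-- The number of parts of a partition sequence. -/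
noncomputable def lenSeq (f : ℕ → ℤ) : ℕ := sInf {k | f k = 0}

/-- The set of boxes of the Young diagram of a partition sequence. -/
def cellsOf (f : ℕ → ℤ) : Set (ℕ × ℕ) := {c | (c.2 : ℤ) < f c.1}

/-- A set of boxes is edge-connected. -/
def IsConnSet (R : Set (ℕ × ℕ)) : Prop :=
  ∀ a ∈ R, ∀ b ∈ R, Relation.ReflTransGen (fun x y => x ∈ R ∧ y ∈ R ∧ BoxAdj x y) a b

/-- A set of boxes contains no `2 × 2` square. -/
def NoSquare (R : Set (ℕ × ℕ)) : Prop :=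
  ¬∃ i j, (i, j) ∈ R ∧ (i + 1, j) ∈ R ∧ (i, j + 1) ∈ R ∧ (i + 1, j + 1) ∈ R

/-- `B` is obtained from the partition (sequence) `A` by removing a border strip of size `s`
starting at the first box of the final row of `A`: `B` is a partition contained in `A`, and
`A \ B` is a connected skew diagram with no `2 × 2` square, of size `s`, containing the first
box of the final row of `A`. -/
def IsStripRemoval (A B : ℕ → ℤ) (s : ℕ) : Prop :=
  IsPartSeq B ∧ cellsOf B ⊆ cellsOf A ∧
  IsConnSet (cellsOf A \ cellsOf B) ∧ NoSquare (cellsOf A \ cellsOf B) ∧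
  (lenSeq A - 1, 0) ∈ cellsOf A \ cellsOf B ∧
  (cellsOf A \ cellsOf B).ncard = s

/-- `c(R)`: the number of columns occupied by the strip `A \ B`. -/
noncomputable def stripCols (A B : ℕ → ℤ) : ℕ :=
  (Prod.snd '' (cellsOf A \ cellsOf B)).ncard


/-- The dot action of the generator `s₀` of the type `BC_∞` Weyl group (for `Sp(2n)`, with
`ρ = (-(n+1), -(n+2), …)`): `s₀ • (a₁, a₂, …) = (2n + 2 - a₁, a₂, …)`. -/
def bcDotS0 (n : ℕ) (f : ℕ → ℤ) : ℕ → ℤ :=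
  Function.update f 0 (2 * (n : ℤ) + 2 - f 0)

/-- The dot action of the generator `s_{j+1}` (swapping the 0-indexed positions `j`, `j+1`):
`sᵢ • (…, aᵢ, a_{i+1}, …) = (…, a_{i+1} - 1, aᵢ + 1, …)`. -/
def bcDotSwap (j : ℕ) (f : ℕ → ℤ) : ℕ → ℤ :=
  fun k => if k = j then f (j + 1) - 1 else if k = j + 1 then f j + 1 else f k

/-- The dot action of the word `s_k ⋯ s₁ s₀` (applied right-to-left). -/
def bcWord (n : ℕ) : ℕ → (ℕ → ℤ) → (ℕ → ℤ)
  | 0 => bcDotS0 n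
  | k + 1 => fun f => bcDotSwap k (bcWord n k f)

/-- The sequence of column lengths `λ†` of a partition sequence. -/
noncomputable def conjSeq (f : ℕ → ℤ) : ℕ → ℤ :=
  fun i => (Set.ncard {r : ℕ | (i : ℤ) < f r} : ℤ)


namespace BSAux

/-- The `j`-th column length of a partition sequence, as the least row index where the
part drops to `≤ j`. -/
noncomputable def col (f : ℕ → ℤ) (j : ℕ) : ℕ := sInf {r | f r ≤ (j : ℤ)}

lemma part_anti {f : ℕ → ℤ} (hf : IsPartSeq f) {i j : ℕ} (h : i ≤ j) : f j ≤ f i := by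
  obtain ⟨d, rfl⟩ := Nat.exists_eq_add_of_le h
  clear h
  induction d with
  | zero => simp
  | succ d ih => exact le_trans (hf.2.1 (i + d)) ih

lemma col_nonempty {f : ℕ → ℤ} (hf : IsPartSeq f) (j : ℕ) :
    {r | f r ≤ (j : ℤ)}.Nonempty := by
  obtain ⟨N, hN⟩ := hf.2.2
  exact ⟨N, by simp only [Set.mem_setOf_eq, hN N le_rfl]; positivity⟩

lemma lt_col {f : ℕ → ℤ} (hf : IsPartSeq f) {j r : ℕ} : r < col f j ↔ (j : ℤ) < f r := by
  constructor
  · intro h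
    by_contra h'
    push_neg at h'
    have := Nat.sInf_le (show r ∈ {r | f r ≤ (j : ℤ)} from h')
    simp only [col] at h
    omega
  · intro h
    by_contra h'
    push_neg at h'
    have hm := Nat.sInf_mem (col_nonempty hf j)
    have h2 := part_anti hf h'
    simp only [Set.mem_setOf_eq] at hm
    simp only [col] at h2
    omega

lemma conjSeq_eq_col {f : ℕ → ℤ} (hf : IsPartSeq f) (j : ℕ) :
    conjSeq f j = (col f j : ℤ) := by
  have hset : {r : ℕ | (j : ℤ) < f r} = Set.Iio (col f j) := by
    ext r
    simp only [Set.mem_setOf_eq, Set.mem_Iio]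
    exact (lt_col hf).symm
  rw [conjSeq]
  rw [hset, ← Finset.coe_Iio, Set.ncard_coe_finset, Nat.card_Iio]

lemma col_anti {f : ℕ → ℤ} (hf : IsPartSeq f) {i j : ℕ} (h : i ≤ j) : col f j ≤ col f i := by
  by_contra h'
  push_neg at h'
  have h1 := (lt_col hf (j := j)).mp h'
  have h2 : ¬ ((i : ℤ) < f (col f i)) := by
    intro hh
    exact lt_irrefl _ ((lt_col hf).mpr hh)
  omega

lemma lenSeq_eq_col {f : ℕ → ℤ} (hf : IsPartSeq f) : lenSeq f = col f 0 := by
  unfold lenSeq col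
  congr 1
  ext k
  have := hf.1 k
  simp only [Set.mem_setOf_eq, Nat.cast_zero]
  omega

lemma bcWord_eval (n k : ℕ) (f : ℕ → ℤ) (i : ℕ) :
    bcWord n k f i =
      if i < k then f (i + 1) - 1
      else if i = k then 2 * (n : ℤ) + 2 - f 0 + k else f i := by
  induction k generalizing i with
  | zero =>
    simp only [bcWord, bcDotS0, Nat.not_lt_zero, if_false, Nat.cast_zero]
    rcases eq_or_ne i 0 with rfl | h
    · simp [Function.update_self]
    · simp [Function.update_of_ne h, h]
  | succ k ih =>
    show bcDotSwap k (bcWord n k f) i = _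
    unfold bcDotSwap
    rcases lt_trichotomy i k with h | rfl | h
    · rw [if_neg (by omega), if_neg (by omega), ih, if_pos h, if_pos (by omega)]
    · rw [if_pos rfl, ih, if_neg (by omega), if_neg (by omega), if_pos (by omega)]
    · rcases eq_or_ne i (k + 1) with rfl | h'
      · rw [if_neg (by omega), if_pos rfl, ih, if_neg (by omega), if_pos rfl,
          if_neg (by omega), if_pos rfl]
        push_cast; ring
      · rw [if_neg (by omega), if_neg h', ih, if_neg (by omega), if_neg (by omega),
          if_neg (by omega), if_neg h']

lemma lower_finite_eq_Iio {S : Set ℕ} (hfin : S.Finite)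
    (hlow : ∀ j ∈ S, ∀ i ≤ j, i ∈ S) : S = Set.Iio S.ncard := by
  have hc : Sᶜ.Nonempty := hfin.infinite_compl.nonempty
  have hm : S = Set.Iio (sInf Sᶜ) := by
    ext r
    constructor
    · intro hr
      by_contra h
      simp only [Set.mem_Iio, not_lt] at h
      exact Nat.sInf_mem hc (hlow r hr _ h)
    · intro hr
      by_contra h
      have := Nat.sInf_le (show r ∈ Sᶜ from h)
      simp only [Set.mem_Iio] at hr
      omega
  have hcard : (Set.Iio (sInf Sᶜ)).ncard = sInf Sᶜ := by
    rw [← Finset.coe_Iio, Set.ncard_coe_finset, Nat.card_Iio]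
  rw [hm, hcard]

lemma path_cols {D : Set (ℕ × ℕ)} {x y : ℕ × ℕ}
    (h : Relation.ReflTransGen (fun u v => u ∈ D ∧ v ∈ D ∧ BoxAdj u v) x y)
    (hx : x ∈ D) :
    ∀ j, (x.2 ≤ j ∧ j ≤ y.2) ∨ (y.2 ≤ j ∧ j ≤ x.2) → ∃ r, (r, j) ∈ D := by
  induction h with
  | refl =>
    intro j hj
    have hje : j = x.2 := by omega
    subst hje
    exact ⟨x.1, by rwa [Prod.mk.eta]⟩
  | @tail b z hpath hrel ih =>
    intro j hj
    obtain ⟨hb, hz, hadj⟩ := hrel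
    have hd : z.2 = b.2 ∨ z.2 = b.2 + 1 ∨ b.2 = z.2 + 1 := by
      rcases hadj with ⟨_, h2⟩ | ⟨h2, _⟩ <;> omega
    by_cases hcase : (x.2 ≤ j ∧ j ≤ b.2) ∨ (b.2 ≤ j ∧ j ≤ x.2)
    · exact ih j hcase
    · have hje : j = z.2 := by omega
      subst hje
      exact ⟨z.1, by rwa [Prod.mk.eta]⟩

lemma path_cross {D : Set (ℕ × ℕ)} {x y : ℕ × ℕ} {j : ℕ}
    (h : Relation.ReflTransGen (fun u v => u ∈ D ∧ v ∈ D ∧ BoxAdj u v) x y)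
    (hx : j + 1 ≤ x.2) (hy : y.2 ≤ j) :
    ∃ r, (r, j) ∈ D ∧ (r, j + 1) ∈ D := by
  induction h with
  | refl => omega
  | @tail b z hpath hrel ih =>
    obtain ⟨hb, hz, hadj⟩ := hrel
    by_cases hb2 : b.2 ≤ j
    · exact ih hb2
    · push_neg at hb2
      have h1 : b.2 = j + 1 ∧ z.2 = j ∧ b.1 = z.1 := by
        rcases hadj with ⟨h1, h2⟩ | ⟨h1, h2⟩ <;> omega
      obtain ⟨hbz, hz2, hbr⟩ := h1
      refine ⟨b.1, ?_, ?_⟩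
      · have he : (b.1, j) = (z.1, z.2) := by rw [hbr, hz2]
        rw [he, Prod.mk.eta]
        exact hz
      · have he : (b.1, j + 1) = (b.1, b.2) := by rw [hbz]
        rw [he, Prod.mk.eta]
        exact hb

lemma sum_strip (a b : ℕ → ℕ) : ∀ m : ℕ, (∀ j < m, b j + 1 = a (j + 1)) →
    (∀ j, b j ≤ a j) →
    (∑ j ∈ Finset.range (m + 1), (a j - b j)) + b m = a 0 + m := by
  intro m
  induction m with
  | zero =>
    intro _ hba
    have := hba 0
    rw [Finset.range_one, Finset.sum_singleton]
    omega
  | succ m ih =>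
    intro hst hba
    rw [Finset.sum_range_succ]
    have h0 := ih (fun j hj => hst j (by omega)) hba
    have h1 := hst m (by omega)
    have h2 := hba (m + 1)
    omega

end BSAux

/-- The symplectic modification rule via border strips agrees with the
rule via the type `BC_∞` Weyl group: if `λ` is a partition with `ℓ(λ) > n` and `R_λ` is the
(nonempty) border strip of size `2(ℓ(λ) - n - 1)` starting at the first box of the final row
of `λ`, with `c` columns and with `λ \ R_λ` a partition, then
`(s_{c-1} ⋯ s₁ s₀) • λ† = (λ \ R_λ)†` for the dot action with `ρ = (-(n+1), -(n+2), …)`. -/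
theorem borderStrip_eq_weylGroup_symplectic (n : ℕ) (A B : ℕ → ℤ)
    (hA : IsPartSeq A) (hlen : n < lenSeq A)
    (hpos : 0 < 2 * (lenSeq A - n - 1))
    (hrem : IsStripRemoval A B (2 * (lenSeq A - n - 1)))
    (c : ℕ) (hc : c = stripCols A B) :
    bcWord n (c - 1) (conjSeq A) = conjSeq B := by
  obtain ⟨hB, hsub, hconn, hnsq, hcell, hcard⟩ := hrem
  set D := cellsOf A \ cellsOf B with hD
  -- membership description of the strip
  have hmem : ∀ r j : ℕ, (r, j) ∈ D ↔ BSAux.col B j ≤ r ∧ r < BSAux.col A j := by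
    intro r j
    simp only [hD, Set.mem_diff, cellsOf, Set.mem_setOf_eq]
    rw [← BSAux.lt_col hA, ← BSAux.lt_col hB]
    omega
  have hba : ∀ j, BSAux.col B j ≤ BSAux.col A j := by
    intro j
    by_contra h
    push_neg at h
    have h1 : (BSAux.col A j, j) ∈ cellsOf B := by
      simp only [cellsOf, Set.mem_setOf_eq]
      exact (BSAux.lt_col hB).mp h
    have h2 := hsub h1
    simp only [cellsOf, Set.mem_setOf_eq] at h2
    have h3 := (BSAux.lt_col hA (j := j) (r := BSAux.col A j)).mpr h2
    omega
  have hDfin : D.Finite := by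
    apply Set.Finite.subset ((Set.finite_Iio (BSAux.col A 0)).prod (Set.finite_Iio (A 0).toNat))
    rintro ⟨r, j⟩ hrj
    obtain ⟨h1, h2⟩ := (hmem r j).mp hrj
    have hj : (j : ℤ) < A r := (BSAux.lt_col hA).mp h2
    have hr0 := BSAux.part_anti hA (Nat.zero_le r)
    refine Set.mem_prod.mpr ⟨?_, ?_⟩
    · exact lt_of_lt_of_le h2 (BSAux.col_anti hA (Nat.zero_le j))
    · simp only [Set.mem_Iio]
      omega
  set S := Prod.snd '' D with hSdef
  have hS : ∀ j, j ∈ S ↔ BSAux.col B j < BSAux.col A j := by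
    intro j
    constructor
    · rintro ⟨⟨r, j'⟩, hrj, rfl⟩
      obtain ⟨h1, h2⟩ := (hmem r j').mp hrj
      show BSAux.col B j' < BSAux.col A j'
      omega
    · intro h
      exact ⟨(BSAux.col B j, j), (hmem _ _).mpr ⟨le_rfl, h⟩, rfl⟩
  have ha0 : BSAux.col A 0 = lenSeq A := (BSAux.lenSeq_eq_col hA).symm
  have hS0 : (0 : ℕ) ∈ S := by
    obtain ⟨h1, h2⟩ := (hmem (lenSeq A - 1) 0).mp hcell
    exact (hS 0).mpr (by omega)
  have hlow : ∀ j ∈ S, ∀ i ≤ j, i ∈ S := by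
    intro j hj i hi
    obtain ⟨⟨r, j'⟩, hrj, hj'⟩ := hj
    subst hj'
    have hpath := hconn _ hrj _ hcell
    obtain ⟨r', hr'⟩ := BSAux.path_cols hpath hrj i (Or.inr ⟨Nat.zero_le i, hi⟩)
    exact ⟨(r', i), hr', rfl⟩
  have hSIio : S = Set.Iio c := by
    have h := BSAux.lower_finite_eq_Iio (hDfin.image _) hlow
    have h2 : S.ncard = c := by rw [hc]; rfl
    rwa [← hSdef, h2] at h
  have hc1 : 1 ≤ c := by
    have h := hS0
    rw [hSIio, Set.mem_Iio] at h
    omega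
  have hstep : ∀ j, j + 1 < c → BSAux.col B j + 1 = BSAux.col A (j + 1) := by
    intro j hj
    have h1 : BSAux.col B (j + 1) < BSAux.col A (j + 1) :=
      (hS _).mp (by rw [hSIio]; exact hj)
    have h2 : BSAux.col B j < BSAux.col A j :=
      (hS _).mp (by rw [hSIio]; simp only [Set.mem_Iio]; omega)
    have hx : (BSAux.col B (j + 1), j + 1) ∈ D := (hmem _ _).mpr ⟨le_rfl, h1⟩
    have hy : (BSAux.col B j, j) ∈ D := (hmem _ _).mpr ⟨le_rfl, h2⟩
    obtain ⟨r, hr1, hr2⟩ := BSAux.path_cross (hconn _ hx _ hy) le_rfl le_rfl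
    have hm1 := (hmem r j).mp hr1
    have hm2 := (hmem r (j + 1)).mp hr2
    have haa : BSAux.col A (j + 1) ≤ BSAux.col A j := BSAux.col_anti hA (Nat.le_succ j)
    have hbb : BSAux.col B (j + 1) ≤ BSAux.col B j := BSAux.col_anti hB (Nat.le_succ j)
    by_contra hne
    apply hnsq
    refine ⟨BSAux.col A (j + 1) - 2, j, ?_, ?_, ?_, ?_⟩ <;>
      · rw [hmem]
        omega
  have heq : ∀ j, c ≤ j → BSAux.col B j = BSAux.col A j := by
    intro j hj
    have h1 : j ∉ S := by
      rw [hSIio, Set.mem_Iio]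
      omega
    have hnot : ¬ BSAux.col B j < BSAux.col A j := fun h => h1 ((hS j).mpr h)
    have h2 := hba j
    omega
  -- size of the strip
  have hsum : (∑ j ∈ Finset.range c, (BSAux.col A j - BSAux.col B j))
      = 2 * (lenSeq A - n - 1) := by
    classical
    set F := (Finset.range c).biUnion
      (fun j => (Finset.Ico (BSAux.col B j) (BSAux.col A j)).image (fun r => (r, j))) with hF
    have hDF : D = ↑F := by
      ext ⟨r, j⟩
      simp only [hF, Finset.coe_biUnion, Finset.coe_image, Finset.coe_Ico, Set.mem_iUnion,
        Set.mem_image, Set.mem_Ico, Finset.mem_coe, Finset.mem_range, hmem r j]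
      constructor
      · rintro ⟨h1, h2⟩
        have hjS : j ∈ S := (hS j).mpr (by omega)
        rw [hSIio, Set.mem_Iio] at hjS
        exact ⟨j, hjS, r, ⟨h1, h2⟩, rfl⟩
      · rintro ⟨j', _, r', hr', heq'⟩
        injection heq' with e1 e2
        subst e1; subst e2
        exact hr'
    have hFcard : F.card = ∑ j ∈ Finset.range c, (BSAux.col A j - BSAux.col B j) := by
      rw [hF, Finset.card_biUnion]
      · apply Finset.sum_congr rfl
        intro j _
        rw [Finset.card_image_of_injective _ (fun r1 r2 h => by simpa using h), Nat.card_Ico]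
      · intro j1 _ j2 _ hne
        rw [Function.onFun, Finset.disjoint_left]
        rintro ⟨r, j⟩ h1 h2
        simp only [Finset.mem_image, Finset.mem_Ico, Prod.mk.injEq] at h1 h2
        obtain ⟨r1, _, _, rfl⟩ := h1
        obtain ⟨r2, _, _, rfl⟩ := h2
        exact hne rfl
    rw [← hFcard, ← Set.ncard_coe_finset, ← hDF]
    exact hcard
  have hkey := BSAux.sum_strip (BSAux.col A) (BSAux.col B) (c - 1)
    (fun j hj => hstep j (by omega)) hba
  rw [show c - 1 + 1 = c by omega, hsum] at hkey
  funext i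
  rw [BSAux.bcWord_eval]
  simp only [BSAux.conjSeq_eq_col hA, BSAux.conjSeq_eq_col hB]
  split_ifs with h1 h2
  · have h := hstep i (by omega)
    omega
  · subst h2
    omega
  · have h := heq i (by omega)
    omega
end
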